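/- arXiv:1803.04386 — 4 statements merged into one kernel-verified Lean document; each statement's English description precedes it below -/
import Mathlib

section
/- For any ε > 0 and μ ∈ ℝ, if W = μ + σ·Z with Z standard normal, then for any bounded measurable F: ℝ → ℝ, ∇_μ E[F(μ + σZ)] = (1/σ²) E[(σZ)·F(μ + σZ)], provided F is Lipschitz. -/
open MeasureTheory ProbabilityTheory Real

lemma aux_hasDerivAt_gaussianPDFReal (v : NNReal) (hv : (v : ℝ) ≠ 0) (x μ : ℝ) :
    HasDerivAt (fun μ' : ℝ => gaussianPDFReal μ' v x)
      (((x - μ) / v) * gaussianPDFReal μ v x) μ := by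
  have h1 : HasDerivAt (fun μ' : ℝ => -(x - μ')^2 / (2 * (v : ℝ))) ((x - μ) / v) μ := by
    have h0 : HasDerivAt (fun μ' : ℝ => x - μ') (-1) μ := (hasDerivAt_id μ).const_sub x
    have h2 := ((h0.pow 2).neg.div_const (2 * (v : ℝ)))
    refine h2.congr_deriv ?_
    field_simp
    ring
  have h3 := (h1.exp).const_mul (√(2 * π * (v : ℝ)))⁻¹
  have : gaussianPDFReal μ v x = (√(2 * π * (v : ℝ)))⁻¹ * rexp (-(x - μ) ^ 2 / (2 * (v : ℝ))) :=
    rfl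
  simp only [gaussianPDFReal]
  refine h3.congr_deriv ?_
  ring

lemma aux_integral_gaussianReal (μ' : ℝ) {v : NNReal} (hv : v ≠ 0) (g : ℝ → ℝ) :
    ∫ x, g x ∂(gaussianReal μ' v) = ∫ x, g x * gaussianPDFReal μ' v x := by
  rw [gaussianReal_of_var_ne_zero _ hv, gaussianPDF_def]
  have hmeq : (fun x => ENNReal.ofReal (gaussianPDFReal μ' v x))
      = (fun x => ((Real.toNNReal (gaussianPDFReal μ' v x) : NNReal) : ENNReal)) := rfl
  rw [hmeq, integral_withDensity_eq_integral_smul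
    (Measurable.real_toNNReal (measurable_gaussianPDFReal μ' v)) g]
  congr 1 with x
  rw [NNReal.smul_def, smul_eq_mul, Real.coe_toNNReal _ (gaussianPDFReal_nonneg μ' v x),
    mul_comm]

lemma aux_map_affine (σ : ℝ) (μ' : ℝ) :
    (gaussianReal 0 1).map (fun z => μ' + σ * z)
      = gaussianReal μ' (⟨σ ^ 2, sq_nonneg σ⟩ : NNReal) := by
  have h1 : (fun z : ℝ => μ' + σ * z) = (fun y : ℝ => μ' + y) ∘ (fun z : ℝ => σ * z) := rfl
  rw [h1, ← Measure.map_map (by fun_prop) (by fun_prop)]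
  rw [gaussianReal_map_const_mul σ, gaussianReal_map_const_add μ']
  simp
  rfl

/-- One-dimensional evolution-strategies gradient identity: for `σ > 0` and a
bounded, measurable, Lipschitz `F : ℝ → ℝ`, the derivative in `μ` of
`E[F(μ + σZ)]`, `Z ~ N(0,1)`, equals `(1/σ²) E[(σZ)·F(μ + σZ)]`. -/
theorem es_gradient_identity
    (σ : ℝ) (hσ : 0 < σ) (m : ℝ) (F : ℝ → ℝ)
    (hF_meas : Measurable F)
    (hF_bdd : ∃ C, ∀ x, |F x| ≤ C)
    (hF_lip : ∃ K : NNReal, LipschitzWith K F) :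
    HasDerivAt (fun μ' : ℝ => ∫ z, F (μ' + σ * z) ∂(gaussianReal 0 1))
      ((1 / σ ^ 2) * ∫ z, (σ * z) * F (m + σ * z) ∂(gaussianReal 0 1)) m := by
  obtain ⟨C, hC⟩ := hF_bdd
  set v : NNReal := (⟨σ ^ 2, sq_nonneg σ⟩ : NNReal) with hv_def
  have hσ2 : (0 : ℝ) < σ ^ 2 := by positivity
  have hv_coe : (v : ℝ) = σ ^ 2 := rfl
  have hv : v ≠ 0 := by
    intro h
    rw [← NNReal.coe_inj] at h
    rw [hv_coe] at h
    simp at h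
    exact hσ2.ne' (by simpa using h)
  have hC0 : 0 ≤ C := le_trans (abs_nonneg (F 0)) (hC 0)
  -- The key change of variables
  have hint : ∀ (μ' : ℝ) (g : ℝ → ℝ), Measurable g →
      ∫ z, g (μ' + σ * z) ∂(gaussianReal 0 1) = ∫ x, g x * gaussianPDFReal μ' v x := by
    intro μ' g hg
    rw [← aux_integral_gaussianReal μ' hv g, ← aux_map_affine σ μ',
      integral_map (by fun_prop) hg.aestronglyMeasurable]
  -- Setup for differentiation under the integral
  set H : ℝ → ℝ → ℝ := fun μ' x => F x * gaussianPDFReal μ' v x with hH_def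
  set H' : ℝ → ℝ → ℝ := fun μ' x => F x * (((x - μ') / σ ^ 2) * gaussianPDFReal μ' v x)
    with hH'_def
  set b : ℝ := 1 / (4 * σ ^ 2) with hb_def
  have hb : 0 < b := by positivity
  set K : ℝ := C / σ ^ 2 * (√(2 * π * (σ ^ 2)))⁻¹ * rexp (1 / (2 * σ ^ 2)) with hK_def
  have hK0 : 0 ≤ K := by positivity
  set bound : ℝ → ℝ := fun x => K * ((|x - m| + 1) * rexp (-b * (x - m) ^ 2)) with hbound_def
  have bound_int : Integrable bound := by
    have h1 : Integrable (fun y : ℝ => (|y| + 1) * rexp (-b * y ^ 2)) := by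
      have h2 : Integrable (fun y : ℝ => |y| * rexp (-b * y ^ 2)) := by
        have := (integrable_mul_exp_neg_mul_sq hb).abs
        refine this.congr (Filter.Eventually.of_forall fun y => ?_)
        simp [abs_mul, abs_of_nonneg (Real.exp_nonneg _)]
      have h3 := integrable_exp_neg_mul_sq hb
      refine (h2.add h3).congr (Filter.Eventually.of_forall fun y => ?_)
      simp only [Pi.add_apply]
      ring
    exact (h1.comp_sub_right m).const_mul K
  have h_pdf_le : ∀ μ' ∈ Metric.ball m 1, ∀ x : ℝ,
      gaussianPDFReal μ' v x ≤ (√(2 * π * (σ ^ 2)))⁻¹ * (rexp (1 / (2 * σ ^ 2)) *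
        rexp (-b * (x - m) ^ 2)) := by
    intro μ' hμ' x
    have hd : |μ' - m| < 1 := by
      rw [Metric.mem_ball, Real.dist_eq] at hμ'
      exact hμ'
    have hsq : (μ' - m) ^ 2 ≤ 1 := by nlinarith [abs_nonneg (μ' - m), sq_abs (μ' - m)]
    have key : (x - m) ^ 2 ≤ 2 * (x - μ') ^ 2 + 2 * (μ' - m) ^ 2 := by
      nlinarith [sq_nonneg ((x - μ') - (μ' - m))]
    have hexp : -(x - μ') ^ 2 / (2 * (v : ℝ)) ≤ 1 / (2 * σ ^ 2) + (-b * (x - m) ^ 2) := by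
      rw [hv_coe, hb_def]
      have heq : (1:ℝ) / (2 * σ ^ 2) + (-(1 / (4 * σ ^ 2)) * (x - m) ^ 2)
          = (-(x - m) ^ 2 / 2 + 1) / (2 * σ ^ 2) := by
        field_simp
        ring
      rw [heq]
      gcongr
      nlinarith
    calc gaussianPDFReal μ' v x
        = (√(2 * π * (v : ℝ)))⁻¹ * rexp (-(x - μ') ^ 2 / (2 * (v : ℝ))) := rfl
      _ ≤ (√(2 * π * (σ ^ 2)))⁻¹ * rexp (1 / (2 * σ ^ 2) + (-b * (x - m) ^ 2)) := by
            rw [hv_coe]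
            exact mul_le_mul_of_nonneg_left (Real.exp_le_exp.2 hexp) (by positivity)
      _ = (√(2 * π * (σ ^ 2)))⁻¹ * (rexp (1 / (2 * σ ^ 2)) * rexp (-b * (x - m) ^ 2)) := by
            rw [Real.exp_add]
  have h_bound : ∀ x : ℝ, ∀ μ' ∈ Metric.ball m 1, ‖H' μ' x‖ ≤ bound x := by
    intro x μ' hμ'
    have hd : |μ' - m| < 1 := by
      rw [Metric.mem_ball, Real.dist_eq] at hμ'
      exact hμ'
    have hxm : |x - μ'| ≤ |x - m| + 1 := by
      have : |x - μ'| ≤ |x - m| + |m - μ'| := abs_sub_le x m μ'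
      have h2 : |m - μ'| ≤ 1 := by rw [abs_sub_comm]; exact hd.le
      linarith
    have hpdf_nonneg := gaussianPDFReal_nonneg μ' v x
    have hpdf_le := h_pdf_le μ' hμ' x
    rw [hH'_def]
    simp only [Real.norm_eq_abs, abs_mul]
    rw [abs_div, abs_of_nonneg hpdf_nonneg, abs_of_pos hσ2]
    calc |F x| * (|x - μ'| / σ ^ 2 * gaussianPDFReal μ' v x)
        ≤ C * ((|x - m| + 1) / σ ^ 2 * ((√(2 * π * (σ ^ 2)))⁻¹ * (rexp (1 / (2 * σ ^ 2)) *
            rexp (-b * (x - m) ^ 2)))) := by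
          apply mul_le_mul (hC x) _ (by positivity) hC0
          apply mul_le_mul _ hpdf_le hpdf_nonneg (by positivity)
          gcongr
      _ = bound x := by rw [hbound_def, hK_def]; ring
  have h_diff : ∀ x : ℝ, ∀ μ' ∈ Metric.ball m 1,
      HasDerivAt (fun μ'' => H μ'' x) (H' μ' x) μ' := by
    intro x μ' _
    exact (aux_hasDerivAt_gaussianPDFReal v (by rw [hv_coe]; exact hσ2.ne') x μ').const_mul (F x)
  have hH_meas : ∀ μ' : ℝ, AEStronglyMeasurable (H μ') volume :=
    fun μ' => (hF_meas.mul (measurable_gaussianPDFReal μ' v)).aestronglyMeasurable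
  have hH_int : Integrable (H m) := by
    refine (integrable_gaussianPDFReal m v).bdd_mul (c := C) hF_meas.aestronglyMeasurable (Filter.Eventually.of_forall fun x => ?_)
    rw [Real.norm_eq_abs]; exact hC x
  have hH'_meas : AEStronglyMeasurable (H' m) volume := by
    apply Measurable.aestronglyMeasurable
    exact hF_meas.mul ((measurable_id.sub_const m).div_const _ |>.mul
      (measurable_gaussianPDFReal m v))
  have main := hasDerivAt_integral_of_dominated_loc_of_deriv_le (Metric.ball_mem_nhds m zero_lt_one)
    (Filter.Eventually.of_forall hH_meas) hH_int hH'_meas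
    (Filter.Eventually.of_forall h_bound) bound_int (Filter.Eventually.of_forall h_diff)
  obtain ⟨-, hderiv⟩ := main
  have heq1 : (fun μ' : ℝ => ∫ z, F (μ' + σ * z) ∂(gaussianReal 0 1))
      = (fun μ' : ℝ => ∫ x, H μ' x) := by
    funext μ'
    exact hint μ' F hF_meas
  have heq2 : (∫ x, H' m x) = (1 / σ ^ 2) * ∫ z, (σ * z) * F (m + σ * z) ∂(gaussianReal 0 1) := by
    have h1 : ∫ z, (σ * z) * F (m + σ * z) ∂(gaussianReal 0 1)
        = ∫ x, ((x - m) * F x) * gaussianPDFReal m v x := by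
      have := hint m (fun x => (x - m) * F x)
        (((measurable_id.sub_const m).mul hF_meas))
      rw [← this]
      congr 1 with z
      ring_nf
    rw [h1, ← integral_const_mul]
    congr 1 with x
    rw [hH'_def]
    field_simp
  rw [heq1, ← heq2]
  exact hderiv
end

section
/- Let (x_n)_{n=1}^N be i.i.d. random variables, and for each n let G_n = g(x_n, Δ) where Δ is a random perturbation independent of the x_n's and g is square-integrable. Then Var((1/N)∑ G_n) = (1/N)·Var(G_1) + ((N-1)/N)·E_{x,x'}[Cov_Δ(g(x,Δ), g(x',Δ) | x, x')], where x, x' are independent copies of x_1. -/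
open MeasureTheory ProbabilityTheory
open scoped BigOperators

private lemma memL2_integrable_mul {α : Type*} [MeasurableSpace α] {μ : Measure α}
    {f g : α → ℝ} (hf : MemLp f 2 μ) (hg : MemLp g 2 μ) :
    Integrable (fun a => f a * g a) μ := by
  have h1 := hf.integrable_sq
  have h2 := hg.integrable_sq
  refine ((h1.add h2).const_mul (1 / 2)).mono' (hf.aestronglyMeasurable.mul
    hg.aestronglyMeasurable) ?_
  filter_upwards with a
  rw [Real.norm_eq_abs, abs_mul]
  simp only [Pi.add_apply]
  nlinarith [sq_nonneg (|f a| - |g a|), abs_nonneg (f a), abs_nonneg (g a), sq_abs (f a),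
    sq_abs (g a)]

/-- Shared-perturbation variance formula: if the inputs `x n` are i.i.d. and
all share a single perturbation `Δ` independent of them, then
`Var((1/N)∑ₙ g(xₙ, Δ)) = (1/N)·Var(g(x₁,Δ)) + ((N-1)/N)·E_{x,x'}[Cov_Δ(g(x,Δ), g(x',Δ))]`. -/
theorem variance_shared_perturbation
    {Ω A P : Type*} [MeasurableSpace Ω] [MeasurableSpace A] [MeasurableSpace P]
    (μ : Measure Ω) [IsProbabilityMeasure μ]
    {N : ℕ} (hN : 0 < N)
    (x : Fin N → Ω → A) (Δ : Ω → P) (g : A → P → ℝ)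
    (hx : ∀ n, Measurable (x n)) (hΔ : Measurable Δ)
    (hg : Measurable (Function.uncurry g))
    -- the inputs are i.i.d.
    (hiid : iIndepFun (m := fun _ : Fin N => (inferInstance : MeasurableSpace A)) x μ)
    (hident : ∀ n, Measure.map (x n) μ = Measure.map (x ⟨0, hN⟩) μ)
    -- the perturbation is independent of the whole input family
    (hind : IndepFun (fun ω n => x n ω) Δ μ)
    -- `g` is square-integrable
    (hL2 : MemLp (Function.uncurry g) 2
      ((Measure.map (x ⟨0, hN⟩) μ).prod (Measure.map Δ μ))) :
    variance (fun ω => (N : ℝ)⁻¹ * ∑ n, g (x n ω) (Δ ω)) μ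
      = (1 / N) * variance (fun ω => g (x ⟨0, hN⟩ ω) (Δ ω)) μ
        + ((N : ℝ) - 1) / N *
          ∫ a, ∫ a',
            ((∫ e, g a e * g a' e ∂(Measure.map Δ μ))
              - (∫ e, g a e ∂(Measure.map Δ μ)) * (∫ e, g a' e ∂(Measure.map Δ μ)))
            ∂(Measure.map (x ⟨0, hN⟩) μ) ∂(Measure.map (x ⟨0, hN⟩) μ) := by
  classical
  set ν := Measure.map (x ⟨0, hN⟩) μ with hνdef
  set lam := Measure.map Δ μ with hlamdef
  have hνp : IsProbabilityMeasure ν := Measure.isProbabilityMeasure_map (hx _).aemeasurable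
  have hlamp : IsProbabilityMeasure lam := Measure.isProbabilityMeasure_map hΔ.aemeasurable
  set ug := Function.uncurry g with hugdef
  have hNne : (N : ℝ) ≠ 0 := Nat.cast_ne_zero.mpr hN.ne'
  -- the law of each pair (x n, Δ)
  have hpairmeas : ∀ n, Measurable fun ω => (x n ω, Δ ω) := fun n => (hx n).prodMk hΔ
  have hpair_law : ∀ n, Measure.map (fun ω => (x n ω, Δ ω)) μ = ν.prod lam := by
    intro n
    have h1 : IndepFun (x n) Δ μ := by
      have := hind.comp (measurable_pi_apply n) measurable_id
      exact this
    rw [(indepFun_iff_map_prod_eq_prod_map_map (hx n).aemeasurable hΔ.aemeasurable).mp h1,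
      hident n]
  -- membership in L² of each g(xₙ, Δ)
  have hGL2 : ∀ n, MemLp (fun ω => g (x n ω) (Δ ω)) 2 μ := by
    intro n
    have h2 : MemLp ug 2 (Measure.map (fun ω => (x n ω, Δ ω)) μ) := by
      rw [hpair_law n]; exact hL2
    exact (memLp_map_measure_iff hg.aestronglyMeasurable (hpairmeas n).aemeasurable).mp h2
  have hGint : ∀ n, Integrable (fun ω => g (x n ω) (Δ ω)) μ :=
    fun n => (hGL2 n).integrable one_le_two
  -- abbreviations
  set m : ℝ := ∫ z, ug z ∂(ν.prod lam) with hmdef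
  set Q : ℝ := ∫ z, (ug z) ^ 2 ∂(ν.prod lam) with hQdef
  set V : ℝ := Q - m ^ 2 with hVdef
  set C : ℝ := ∫ a, ∫ a', ((∫ e, g a e * g a' e ∂lam)
      - (∫ e, g a e ∂lam) * (∫ e, g a' e ∂lam)) ∂ν ∂ν with hCdef
  -- first moments
  have hEG : ∀ n, ∫ ω, g (x n ω) (Δ ω) ∂μ = m := by
    intro n
    rw [hmdef, ← hpair_law n,
      integral_map (hpairmeas n).aemeasurable hg.aestronglyMeasurable]
    rfl
  have hEG2 : ∀ n, ∫ ω, (g (x n ω) (Δ ω)) ^ 2 ∂μ = Q := by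
    intro n
    rw [hQdef, ← hpair_law n,
      integral_map (hpairmeas n).aemeasurable (hg.pow_const 2).aestronglyMeasurable]
    rfl
  -- variance of a single term
  have hVar : ∀ n, variance (fun ω => g (x n ω) (Δ ω)) μ = V := by
    intro n
    rw [variance_eq_sub (hGL2 n), hVdef]
    have h1 : (∫ ω, ((fun ω => g (x n ω) (Δ ω)) ^ 2) ω ∂μ) = Q := by
      simpa using hEG2 n
    rw [h1, hEG n]
  -- integrability of uncurried g on the product
  have hugint : Integrable ug (ν.prod lam) := hL2.integrable one_le_two
  have hIint : Integrable (fun a => ∫ e, g a e ∂lam) ν := by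
    have := hugint.integral_prod_left
    exact this
  have hm_iter : m = ∫ a, ∫ e, g a e ∂lam ∂ν := by
    rw [hmdef, integral_prod _ hugint]
    rfl
  -- covariance term for distinct indices
  have hcov : ∀ n q : Fin N, n ≠ q →
      (∫ ω, g (x n ω) (Δ ω) * g (x q ω) (Δ ω) ∂μ) - m * m = C := by
    intro n q hne
    set T : Ω → (A × A) × P := fun ω => ((x n ω, x q ω), Δ ω) with hTdef
    have hTmeas : Measurable T := ((hx n).prodMk (hx q)).prodMk hΔ
    have hhmeas : Measurable fun z : (A × A) × P => g z.1.1 z.2 * g z.1.2 z.2 := by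
      have h1 : Measurable fun z : (A × A) × P => g z.1.1 z.2 :=
        hg.comp (measurable_fst.fst.prodMk measurable_snd)
      have h2 : Measurable fun z : (A × A) × P => g z.1.2 z.2 :=
        hg.comp (measurable_fst.snd.prodMk measurable_snd)
      exact h1.mul h2
    -- the law of ((x n, x q), Δ)
    have hTlaw : Measure.map T μ = (ν.prod ν).prod lam := by
      have hxy : IndepFun (fun ω => (x n ω, x q ω)) Δ μ := by
        have := hind.comp ((measurable_pi_apply n).prodMk (measurable_pi_apply q))
          measurable_id
        exact this
      have hnm : IndepFun (x n) (x q) μ := hiid.indepFun hne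
      rw [hTdef,
        (indepFun_iff_map_prod_eq_prod_map_map ((hx n).prodMk (hx q)).aemeasurable
          hΔ.aemeasurable).mp hxy,
        (indepFun_iff_map_prod_eq_prod_map_map (hx n).aemeasurable
          (hx q).aemeasurable).mp hnm, hident n, hident q]
    have hint_comp : Integrable
        (fun ω => (fun z : (A × A) × P => g z.1.1 z.2 * g z.1.2 z.2) (T ω)) μ :=
      memL2_integrable_mul (hGL2 n) (hGL2 q)
    have hinth : Integrable (fun z : (A × A) × P => g z.1.1 z.2 * g z.1.2 z.2)
        ((ν.prod ν).prod lam) := by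
      rw [← hTlaw]
      exact (integrable_map_measure hhmeas.aestronglyMeasurable hTmeas.aemeasurable).mpr
        hint_comp
    have hinner : Integrable (fun p : A × A => ∫ e, g p.1 e * g p.2 e ∂lam)
        (ν.prod ν) := by
      have := hinth.integral_prod_left
      exact this
    have hII : Integrable (fun p : A × A => (∫ e, g p.1 e ∂lam) * ∫ e, g p.2 e ∂lam)
        (ν.prod ν) := hIint.mul_prod hIint
    have hIsub : Integrable (fun p : A × A =>
        (∫ e, g p.1 e * g p.2 e ∂lam) - (∫ e, g p.1 e ∂lam) * ∫ e, g p.2 e ∂lam)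
        (ν.prod ν) := hinner.sub hII
    have hmm : (∫ p : A × A, (∫ e, g p.1 e ∂lam) * ∫ e, g p.2 e ∂lam ∂(ν.prod ν))
        = m * m := by
      rw [hm_iter]
      exact integral_prod_mul (fun a => ∫ e, g a e ∂lam) (fun a => ∫ e, g a e ∂lam)
    have step1 : ∫ ω, g (x n ω) (Δ ω) * g (x q ω) (Δ ω) ∂μ
        = ∫ z : (A × A) × P, g z.1.1 z.2 * g z.1.2 z.2 ∂((ν.prod ν).prod lam) := by
      rw [← hTlaw]
      exact (integral_map hTmeas.aemeasurable hhmeas.aestronglyMeasurable).symm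
    have step2 : ∫ z : (A × A) × P, g z.1.1 z.2 * g z.1.2 z.2 ∂((ν.prod ν).prod lam)
        = ∫ p : A × A, ∫ e, g p.1 e * g p.2 e ∂lam ∂(ν.prod ν) := by
      have := integral_prod (fun z : (A × A) × P => g z.1.1 z.2 * g z.1.2 z.2) hinth
      exact this
    have step3 : (∫ p : A × A, ∫ e, g p.1 e * g p.2 e ∂lam ∂(ν.prod ν)) - m * m
        = ∫ p : A × A, ((∫ e, g p.1 e * g p.2 e ∂lam)
            - (∫ e, g p.1 e ∂lam) * ∫ e, g p.2 e ∂lam) ∂(ν.prod ν) := by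
      rw [integral_sub hinner hII, hmm]
    have step4 : (∫ p : A × A, ((∫ e, g p.1 e * g p.2 e ∂lam)
        - (∫ e, g p.1 e ∂lam) * ∫ e, g p.2 e ∂lam) ∂(ν.prod ν)) = C := by
      rw [hCdef]
      exact integral_prod _ hIsub
    rw [step1, step2, step3, step4]
  -- integrability of products
  have hmul_int : ∀ n q : Fin N,
      Integrable (fun ω => g (x n ω) (Δ ω) * g (x q ω) (Δ ω)) μ :=
    fun n q => memL2_integrable_mul (hGL2 n) (hGL2 q)
  -- each summand of the double sum
  have hterm : ∀ n q : Fin N,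
      (∫ ω, g (x n ω) (Δ ω) * g (x q ω) (Δ ω) ∂μ) - m * m
        = if n = q then V else C := by
    intro n q
    by_cases hne : n = q
    · subst hne
      rw [if_pos rfl, hVdef]
      have : (∫ ω, g (x n ω) (Δ ω) * g (x n ω) (Δ ω) ∂μ) = Q := by
        simp_rw [← sq]; exact hEG2 n
      rw [this]; ring
    · rw [if_neg hne]; exact hcov n q hne
  -- variance of the unnormalized sum
  have hSL2 : MemLp (fun ω => ∑ n, g (x n ω) (Δ ω)) 2 μ :=
    memLp_finsetSum Finset.univ fun n _ => hGL2 n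
  have hVarS : variance (fun ω => ∑ n, g (x n ω) (Δ ω)) μ
      = (N : ℝ) * V + ((N : ℝ) * (N : ℝ) - (N : ℝ)) * C := by
    rw [variance_eq_sub hSL2]
    have hES : ∫ ω, (∑ n, g (x n ω) (Δ ω)) ∂μ = (N : ℝ) * m := by
      rw [integral_finset_sum _ fun n _ => hGint n]
      simp [hEG, Finset.card_univ]
    have hsq : ∀ ω : Ω, ((fun ω => ∑ n, g (x n ω) (Δ ω)) ^ 2) ω
        = ∑ n, ∑ q, g (x n ω) (Δ ω) * g (x q ω) (Δ ω) := by
      intro ω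
      simp only [Pi.pow_apply, sq, Finset.sum_mul_sum]
    have hES2 : ∫ ω, ((fun ω => ∑ n, g (x n ω) (Δ ω)) ^ 2) ω ∂μ
        = ∑ n, ∑ q, ∫ ω, g (x n ω) (Δ ω) * g (x q ω) (Δ ω) ∂μ := by
      simp_rw [hsq]
      rw [integral_finset_sum _ fun n _ =>
        integrable_finset_sum _ fun q _ => hmul_int n q]
      exact Finset.sum_congr rfl fun n _ =>
        integral_finset_sum _ fun q _ => hmul_int n q
    rw [hES2, hES]
    have hsplit : ∑ n : Fin N, ∑ q : Fin N, ∫ ω, g (x n ω) (Δ ω) * g (x q ω) (Δ ω) ∂μ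
        = (∑ n : Fin N, ∑ q : Fin N,
            ((∫ ω, g (x n ω) (Δ ω) * g (x q ω) (Δ ω) ∂μ) - m * m))
          + (N : ℝ) * (N : ℝ) * (m * m) := by
      simp [Finset.sum_sub_distrib, Finset.card_univ]
      ring
    rw [hsplit]
    have hrow : ∀ n : Fin N, ∑ q : Fin N,
        ((∫ ω, g (x n ω) (Δ ω) * g (x q ω) (Δ ω) ∂μ) - m * m)
          = V + ((N : ℝ) - 1) * C := by
      intro n
      simp_rw [hterm n]
      have : ∀ q : Fin N, (if n = q then V else C)
          = (if n = q then V - C else 0) + C := by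
        intro q; split <;> ring
      simp_rw [this]
      rw [Finset.sum_add_distrib, Finset.sum_ite_eq, if_pos (Finset.mem_univ n),
        Finset.sum_const, Finset.card_univ, Fintype.card_fin, nsmul_eq_mul]
      ring
    simp_rw [hrow]
    rw [Finset.sum_const, Finset.card_univ, Fintype.card_fin, nsmul_eq_mul]
    ring
  -- put everything together
  rw [variance_const_mul ((N : ℝ)⁻¹) (fun ω => ∑ n, g (x n ω) (Δ ω)) μ, hVarS,
    hVar ⟨0, hN⟩]
  field_simp
end

section
/- (Flipout variance theorem, flipout case) Suppose Δ_n = Ŵ ∘ r_n s_nᵀ where Ŵ is a shared base perturbation and (r_n, s_n) are independent sign vectors across n, all independent of the i.i.d. inputs. Then Var(G_B) = α/N + ((N-1)/N)·γ, where γ = E_{x,x'}[Cov_Ŵ(E[g(x,Δ)|x,Ŵ], E[g(x',Δ')|x',Ŵ] | x,x')] and α is the single-example gradient variance. -/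
open MeasureTheory ProbabilityTheory
open scoped BigOperators ENNReal

/-- The flipout perturbation `Ŵ ∘ r sᵀ`: elementwise product of the base
perturbation with the rank-one sign matrix `r sᵀ`. -/
def flipPert {p q : ℕ} (w : Fin p → Fin q → ℝ)
    (z : (Fin p → ℝ) × (Fin q → ℝ)) : Fin p → Fin q → ℝ :=
  fun i j => w i j * (z.1 i * z.2 j)

lemma indepFun_peel {Ω ι : Type*} [MeasurableSpace Ω] {μ : Measure Ω} {β : ι → Type*}
    {m : ∀ i, MeasurableSpace (β i)} {f : ∀ i, Ω → β i} [IsProbabilityMeasure μ]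
    (hindep : iIndepFun (m := m) f μ) (hmeas : ∀ i, Measurable (f i))
    (i : ι) (T : Finset ι) (hi : i ∉ T) {γ : Type*} [MeasurableSpace γ]
    (φ : (∀ j : T, β j) → γ) (hφ : Measurable φ) :
    IndepFun (f i) (fun ω => φ (fun j => f j ω)) μ := by
  have h := hindep.indepFun_finset {i} T (Finset.disjoint_singleton_left.mpr hi) hmeas
  exact h.comp (measurable_pi_apply (⟨i, Finset.mem_singleton_self i⟩ : ({i} : Finset ι))) hφ


lemma indepFun_peel₂ {Ω ι : Type*} [MeasurableSpace Ω] {μ : Measure Ω} {β : ι → Type*}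
    {m : ∀ i, MeasurableSpace (β i)} {f : ∀ i, Ω → β i} [IsProbabilityMeasure μ]
    [DecidableEq ι]
    (hindep : iIndepFun (m := m) f μ) (hmeas : ∀ i, Measurable (f i))
    (i j k : ι) (hi : i ∉ ({j, k} : Finset ι)) :
    IndepFun (f i) (fun ω => (f j ω, f k ω)) μ :=
  indepFun_peel hindep hmeas i {j, k} hi
    (fun t => (t ⟨j, by simp⟩, t ⟨k, by simp⟩))
    ((measurable_pi_apply _).prodMk (measurable_pi_apply _))

lemma indepFun_peel₃ {Ω ι : Type*} [MeasurableSpace Ω] {μ : Measure Ω} {β : ι → Type*}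
    {m : ∀ i, MeasurableSpace (β i)} {f : ∀ i, Ω → β i} [IsProbabilityMeasure μ]
    [DecidableEq ι]
    (hindep : iIndepFun (m := m) f μ) (hmeas : ∀ i, Measurable (f i))
    (i j k l : ι) (hi : i ∉ ({j, k, l} : Finset ι)) :
    IndepFun (f i) (fun ω => (f j ω, (f k ω, f l ω))) μ :=
  indepFun_peel hindep hmeas i {j, k, l} hi
    (fun t => (t ⟨j, by simp⟩, (t ⟨k, by simp⟩, t ⟨l, by simp⟩)))
    ((measurable_pi_apply _).prodMk
      ((measurable_pi_apply _).prodMk (measurable_pi_apply _)))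

lemma indepFun_peel₄ {Ω ι : Type*} [MeasurableSpace Ω] {μ : Measure Ω} {β : ι → Type*}
    {m : ∀ i, MeasurableSpace (β i)} {f : ∀ i, Ω → β i} [IsProbabilityMeasure μ]
    [DecidableEq ι]
    (hindep : iIndepFun (m := m) f μ) (hmeas : ∀ i, Measurable (f i))
    (i j k l e : ι) (hi : i ∉ ({j, k, l, e} : Finset ι)) :
    IndepFun (f i) (fun ω => (f j ω, (f k ω, (f l ω, f e ω)))) μ :=
  indepFun_peel hindep hmeas i {j, k, l, e} hi
    (fun t => (t ⟨j, by simp⟩, (t ⟨k, by simp⟩, (t ⟨l, by simp⟩, t ⟨e, by simp⟩))))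
    ((measurable_pi_apply _).prodMk ((measurable_pi_apply _).prodMk
      ((measurable_pi_apply _).prodMk (measurable_pi_apply _))))

lemma map_pair_eq_prod {Ω : Type*} [MeasurableSpace Ω] {μ : Measure Ω} [IsFiniteMeasure μ]
    {β γ : Type*} [MeasurableSpace β] [MeasurableSpace γ] {f : Ω → β} {h : Ω → γ}
    (hf : Measurable f) (hh : Measurable h) (hind : IndepFun f h μ) :
    μ.map (fun ω => (f ω, h ω)) = (μ.map f).prod (μ.map h) :=
  (indepFun_iff_map_prod_eq_prod_map_map hf.aemeasurable hh.aemeasurable).mp hind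

lemma measurable_flipPert {p q : ℕ} :
    Measurable (fun wz : (Fin p → Fin q → ℝ) × ((Fin p → ℝ) × (Fin q → ℝ)) =>
      flipPert wz.1 wz.2) := by
  unfold flipPert; fun_prop

/-- Flipout variance theorem, flipout case: with perturbations
`Δₙ = Ŵ ∘ rₙ sₙᵀ` built from a shared base perturbation `Ŵ` and independent
per-example sign vectors, `Var(G_B) = α/N + ((N-1)/N)·γ`, where `α` is the
single-example gradient variance and `γ` is the expected covariance over `Ŵ`
of the sign-averaged gradients of two independent examples. -/
theorem flipout_variance_flipout_case
    {Ω A : Type} [MeasurableSpace Ω] [MeasurableSpace A]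
    (μ : Measure Ω) [IsProbabilityMeasure μ]
    {N p q : ℕ} (hN : 0 < N)
    (x : Fin N → Ω → A) (W : Ω → Fin p → Fin q → ℝ)
    (r : Fin N → Ω → Fin p → ℝ) (s : Fin N → Ω → Fin q → ℝ)
    (g : A → (Fin p → Fin q → ℝ) → ℝ)
    (hx : ∀ n, Measurable (x n)) (hW : Measurable W)
    (hr : ∀ n, Measurable (r n)) (hs : ∀ n, Measurable (s n))
    (hg : Measurable (Function.uncurry g))
    -- the sign vectors take values in `{-1, 1}`
    (hrsign : ∀ n ω i, r n ω i = 1 ∨ r n ω i = -1)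
    (hssign : ∀ n ω j, s n ω j = 1 ∨ s n ω j = -1)
    -- the inputs, the per-example sign-vector pairs, and the base
    -- perturbation are all jointly independent
    (hjoint : iIndepFun
      (β := fun i : Fin N ⊕ Fin N ⊕ Unit =>
        match i with
        | .inl _ => A
        | .inr (.inl _) => (Fin p → ℝ) × (Fin q → ℝ)
        | .inr (.inr _) => Fin p → Fin q → ℝ)
      (m := fun i => match i with
        | .inl _ => inferInstance
        | .inr (.inl _) => inferInstance
        | .inr (.inr _) => inferInstance)
      (fun i => match i with
        | .inl n => x n
        | .inr (.inl n) => fun ω => (r n ω, s n ω)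
        | .inr (.inr _) => W) μ)
    -- identical distributions
    (hxid : ∀ n, Measure.map (x n) μ = Measure.map (x ⟨0, hN⟩) μ)
    (hrsid : ∀ n, Measure.map (fun ω => (r n ω, s n ω)) μ
      = Measure.map (fun ω => (r ⟨0, hN⟩ ω, s ⟨0, hN⟩ ω)) μ)
    -- square integrability of the single-example gradient
    (hL2 : MemLp (fun ω =>
      g (x ⟨0, hN⟩ ω) (flipPert (W ω) (r ⟨0, hN⟩ ω, s ⟨0, hN⟩ ω))) 2 μ) :
    variance (fun ω =>
        (N : ℝ)⁻¹ * ∑ n, g (x n ω) (flipPert (W ω) (r n ω, s n ω))) μ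
      = variance (fun ω =>
          g (x ⟨0, hN⟩ ω) (flipPert (W ω) (r ⟨0, hN⟩ ω, s ⟨0, hN⟩ ω))) μ / N
        + ((N : ℝ) - 1) / N *
          ∫ a, ∫ a',
            ((∫ w, (∫ z, g a (flipPert w z)
                    ∂(Measure.map (fun ω => (r ⟨0, hN⟩ ω, s ⟨0, hN⟩ ω)) μ)) *
                  (∫ z, g a' (flipPert w z)
                    ∂(Measure.map (fun ω => (r ⟨0, hN⟩ ω, s ⟨0, hN⟩ ω)) μ))
                ∂(Measure.map W μ))
              - (∫ w, ∫ z, g a (flipPert w z)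
                    ∂(Measure.map (fun ω => (r ⟨0, hN⟩ ω, s ⟨0, hN⟩ ω)) μ)
                  ∂(Measure.map W μ)) *
                (∫ w, ∫ z, g a' (flipPert w z)
                    ∂(Measure.map (fun ω => (r ⟨0, hN⟩ ω, s ⟨0, hN⟩ ω)) μ)
                  ∂(Measure.map W μ)))
            ∂(Measure.map (x ⟨0, hN⟩) μ) ∂(Measure.map (x ⟨0, hN⟩) μ) := by
  classical
  rcases Nat.lt_or_ge N 2 with hN1 | hN2
  · -- `N = 1`
    interval_cases N
    have h0 : (⟨0, hN⟩ : Fin 1) = 0 := rfl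
    simp only [h0, Fin.sum_univ_one, Nat.cast_one, inv_one, one_mul, div_one]
    norm_num
  · -- main case `N ≥ 2`
    set ρx := Measure.map (x ⟨0, hN⟩) μ with hρx
    set ρz := Measure.map (fun ω => (r ⟨0, hN⟩ ω, s ⟨0, hN⟩ ω)) μ with hρz
    set ρW := Measure.map W μ with hρW
    have hZm : ∀ n, Measurable (fun ω => (r n ω, s n ω)) :=
      fun n => (hr n).prodMk (hs n)
    haveI : IsProbabilityMeasure ρx := Measure.isProbabilityMeasure_map (hx _).aemeasurable
    haveI : IsProbabilityMeasure ρz := Measure.isProbabilityMeasure_map (hZm _).aemeasurable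
    haveI : IsProbabilityMeasure ρW := Measure.isProbabilityMeasure_map hW.aemeasurable
    -- laws of tuples
    -- (W, Z n)
    have lawWZ : ∀ n : Fin N,
        μ.map (fun ω => (W ω, (r n ω, s n ω))) = ρW.prod ρz := by
      intro n
      have hind : IndepFun W (fun ω => (r n ω, s n ω)) μ :=
        hjoint.indepFun (i := Sum.inr (Sum.inr ())) (j := Sum.inr (Sum.inl n))
          (by rintro ⟨⟩)
      rw [map_pair_eq_prod hW (hZm n) hind, hrsid n]
    -- (x n, (W, Z n))
    have law3 : ∀ n : Fin N,
        μ.map (fun ω => (x n ω, (W ω, (r n ω, s n ω)))) = ρx.prod (ρW.prod ρz) := by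
      intro n
      have hind : IndepFun (x n) (fun ω => (W ω, (r n ω, s n ω))) μ :=
        indepFun_peel₂ hjoint (by rintro (n | n | u); exacts [hx n, hZm n, hW]) (Sum.inl n) (Sum.inr (Sum.inr ()))
          (Sum.inr (Sum.inl n)) (by simp)
      rw [map_pair_eq_prod (hx n) (hW.prodMk (hZm n)) hind, hxid n, lawWZ n]
    -- pairs of sign-vectors
    have lawZZ : ∀ n m : Fin N, n ≠ m →
        μ.map (fun ω => ((r n ω, s n ω), (r m ω, s m ω))) = ρz.prod ρz := by
      intro n m hnm
      have hind : IndepFun (fun ω => (r n ω, s n ω)) (fun ω => (r m ω, s m ω)) μ :=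
        hjoint.indepFun (i := Sum.inr (Sum.inl n)) (j := Sum.inr (Sum.inl m))
          (by simpa using hnm)
      rw [map_pair_eq_prod (hZm n) (hZm m) hind, hrsid n, hrsid m]
    -- (W, (Z n, Z m))
    have lawWZZ : ∀ n m : Fin N, n ≠ m →
        μ.map (fun ω => (W ω, ((r n ω, s n ω), (r m ω, s m ω))))
          = ρW.prod (ρz.prod ρz) := by
      intro n m hnm
      have hind : IndepFun W (fun ω => ((r n ω, s n ω), (r m ω, s m ω))) μ :=
        indepFun_peel₂ hjoint (by rintro (n | n | u); exacts [hx n, hZm n, hW]) (Sum.inr (Sum.inr ()))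
          (Sum.inr (Sum.inl n)) (Sum.inr (Sum.inl m)) (by simp)
      rw [map_pair_eq_prod hW ((hZm n).prodMk (hZm m)) hind, lawZZ n m hnm]
    -- (x m, (W, (Z n, Z m)))
    have law4 : ∀ n m : Fin N, n ≠ m →
        μ.map (fun ω => (x m ω, (W ω, ((r n ω, s n ω), (r m ω, s m ω)))))
          = ρx.prod (ρW.prod (ρz.prod ρz)) := by
      intro n m hnm
      have hind : IndepFun (x m)
          (fun ω => (W ω, ((r n ω, s n ω), (r m ω, s m ω)))) μ :=
        indepFun_peel₃ hjoint (by rintro (n | n | u); exacts [hx n, hZm n, hW]) (Sum.inl m) (Sum.inr (Sum.inr ()))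
          (Sum.inr (Sum.inl n)) (Sum.inr (Sum.inl m)) (by simp)
      rw [map_pair_eq_prod (hx m) (hW.prodMk ((hZm n).prodMk (hZm m))) hind,
        hxid m, lawWZZ n m hnm]
    -- (x n, (x m, (W, (Z n, Z m))))
    have law5 : ∀ n m : Fin N, n ≠ m →
        μ.map (fun ω => (x n ω, (x m ω, (W ω, ((r n ω, s n ω), (r m ω, s m ω))))))
          = ρx.prod (ρx.prod (ρW.prod (ρz.prod ρz))) := by
      intro n m hnm
      have hind : IndepFun (x n)
          (fun ω => (x m ω, (W ω, ((r n ω, s n ω), (r m ω, s m ω))))) μ :=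
        indepFun_peel₄ hjoint (by rintro (n | n | u); exacts [hx n, hZm n, hW]) (Sum.inl n) (Sum.inl m) (Sum.inr (Sum.inr ()))
          (Sum.inr (Sum.inl n)) (Sum.inr (Sum.inl m)) (by simp [hnm])
      rw [map_pair_eq_prod (hx n)
        ((hx m).prodMk (hW.prodMk ((hZm n).prodMk (hZm m)))) hind,
        hxid n, law4 n m hnm]
    -- measurability of the integrands
    have hG3m : Measurable (fun t : A × ((Fin p → Fin q → ℝ) × ((Fin p → ℝ) × (Fin q → ℝ))) =>
        g t.1 (flipPert t.2.1 t.2.2)) :=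
      hg.comp (measurable_fst.prodMk (measurable_flipPert.comp measurable_snd))
    have hK1m : Measurable (fun t : A × (A × ((Fin p → Fin q → ℝ) ×
        (((Fin p → ℝ) × (Fin q → ℝ)) × ((Fin p → ℝ) × (Fin q → ℝ))))) =>
        g t.1 (flipPert t.2.2.1 t.2.2.2.1)) :=
      hg.comp (measurable_fst.prodMk (measurable_flipPert.comp
        ((measurable_fst.comp (measurable_snd.comp measurable_snd)).prodMk
          (measurable_fst.comp (measurable_snd.comp (measurable_snd.comp measurable_snd))))))
    have hK2m : Measurable (fun t : A × (A × ((Fin p → Fin q → ℝ) ×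
        (((Fin p → ℝ) × (Fin q → ℝ)) × ((Fin p → ℝ) × (Fin q → ℝ))))) =>
        g t.2.1 (flipPert t.2.2.1 t.2.2.2.2)) :=
      hg.comp ((measurable_fst.comp measurable_snd).prodMk (measurable_flipPert.comp
        ((measurable_fst.comp (measurable_snd.comp measurable_snd)).prodMk
          (measurable_snd.comp (measurable_snd.comp (measurable_snd.comp measurable_snd))))))
    have hKm : Measurable (fun t : A × (A × ((Fin p → Fin q → ℝ) ×
        (((Fin p → ℝ) × (Fin q → ℝ)) × ((Fin p → ℝ) × (Fin q → ℝ))))) =>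
        g t.1 (flipPert t.2.2.1 t.2.2.2.1) * g t.2.1 (flipPert t.2.2.1 t.2.2.2.2)) :=
      hK1m.mul hK2m
    -- tuple maps
    have htuple3 : ∀ n, Measurable (fun ω => (x n ω, (W ω, (r n ω, s n ω)))) :=
      fun n => (hx n).prodMk (hW.prodMk (hZm n))
    have htuple5 : ∀ n m, Measurable
        (fun ω => (x n ω, (x m ω, (W ω, ((r n ω, s n ω), (r m ω, s m ω)))))) :=
      fun n m => (hx n).prodMk ((hx m).prodMk (hW.prodMk ((hZm n).prodMk (hZm m))))
    -- the three basic integrals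
    set I1 : ℝ := ∫ t, g t.1 (flipPert t.2.1 t.2.2) ∂(ρx.prod (ρW.prod ρz)) with hI1
    set I2 : ℝ := ∫ t, g t.1 (flipPert t.2.1 t.2.2) * g t.1 (flipPert t.2.1 t.2.2)
      ∂(ρx.prod (ρW.prod ρz)) with hI2
    set C5 : ℝ := ∫ t, g t.1 (flipPert t.2.2.1 t.2.2.2.1) * g t.2.1 (flipPert t.2.2.1 t.2.2.2.2)
      ∂(ρx.prod (ρx.prod (ρW.prod (ρz.prod ρz)))) with hC5
    -- L² facts
    have hG3L2 : MemLp (fun t : A × ((Fin p → Fin q → ℝ) × ((Fin p → ℝ) × (Fin q → ℝ))) =>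
        g t.1 (flipPert t.2.1 t.2.2)) 2 (ρx.prod (ρW.prod ρz)) := by
      rw [hρx, hρW, hρz, ← law3 ⟨0, hN⟩]
      exact (memLp_map_measure_iff hG3m.aestronglyMeasurable
        (htuple3 _).aemeasurable).mpr hL2
    have hYL2 : ∀ n, MemLp (fun ω => g (x n ω) (flipPert (W ω) (r n ω, s n ω))) 2 μ := by
      intro n
      have h := hG3L2
      rw [← law3 n] at h
      exact (memLp_map_measure_iff hG3m.aestronglyMeasurable
        (htuple3 n).aemeasurable).mp h
    have hYint : ∀ n, Integrable (fun ω => g (x n ω) (flipPert (W ω) (r n ω, s n ω))) μ :=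
      fun n => (hYL2 n).integrable one_le_two
    have hhalf : (1 : ℝ≥0∞) / 1 = 1 / 2 + 1 / 2 := by
      rw [ENNReal.add_halves]; norm_num
    have hYmul : ∀ n m, Integrable (fun ω =>
        g (x n ω) (flipPert (W ω) (r n ω, s n ω)) *
        g (x m ω) (flipPert (W ω) (r m ω, s m ω))) μ := by
      intro n m
      exact memLp_one_iff_integrable.mp (MemLp.smul (r := 1) (hYL2 m) (hYL2 n))
    -- transfers of moments
    have hIm : ∀ n, ∫ ω, g (x n ω) (flipPert (W ω) (r n ω, s n ω)) ∂μ = I1 := by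
      intro n
      rw [hI1, ← law3 n,
        integral_map (htuple3 n).aemeasurable hG3m.aestronglyMeasurable]
    have hIsq : ∀ n, ∫ ω, g (x n ω) (flipPert (W ω) (r n ω, s n ω)) *
        g (x n ω) (flipPert (W ω) (r n ω, s n ω)) ∂μ = I2 := by
      intro n
      rw [hI2, ← law3 n,
        integral_map (htuple3 n).aemeasurable
          (f := fun t : A × ((Fin p → Fin q → ℝ) × ((Fin p → ℝ) × (Fin q → ℝ))) =>
            g t.1 (flipPert t.2.1 t.2.2) * g t.1 (flipPert t.2.1 t.2.2))
          (hG3m.mul hG3m).aestronglyMeasurable]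
    have hIpair : ∀ n m, n ≠ m → ∫ ω, g (x n ω) (flipPert (W ω) (r n ω, s n ω)) *
        g (x m ω) (flipPert (W ω) (r m ω, s m ω)) ∂μ = C5 := by
      intro n m hnm
      rw [hC5, ← law5 n m hnm,
        integral_map (htuple5 n m).aemeasurable hKm.aestronglyMeasurable]
    have hInm : ∀ n m : Fin N, ∫ ω, g (x n ω) (flipPert (W ω) (r n ω, s n ω)) *
        g (x m ω) (flipPert (W ω) (r m ω, s m ω)) ∂μ = if n = m then I2 else C5 := by
      intro n m
      by_cases h : n = m
      · subst h; simp [hIsq n]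
      · simp [h, hIpair n m h]
    -- integrability of the five-fold integrand
    have h01 : (⟨0, hN⟩ : Fin N) ≠ ⟨1, hN2⟩ := by
      intro h
      simpa using congrArg Fin.val h
    have hK1L2 : MemLp (fun t : A × (A × ((Fin p → Fin q → ℝ) ×
        (((Fin p → ℝ) × (Fin q → ℝ)) × ((Fin p → ℝ) × (Fin q → ℝ))))) =>
        g t.1 (flipPert t.2.2.1 t.2.2.2.1)) 2
        (ρx.prod (ρx.prod (ρW.prod (ρz.prod ρz)))) := by
      rw [← law5 ⟨0, hN⟩ ⟨1, hN2⟩ h01]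
      exact (memLp_map_measure_iff hK1m.aestronglyMeasurable
        (htuple5 _ _).aemeasurable).mpr (hYL2 ⟨0, hN⟩)
    have hK2L2 : MemLp (fun t : A × (A × ((Fin p → Fin q → ℝ) ×
        (((Fin p → ℝ) × (Fin q → ℝ)) × ((Fin p → ℝ) × (Fin q → ℝ))))) =>
        g t.2.1 (flipPert t.2.2.1 t.2.2.2.2)) 2
        (ρx.prod (ρx.prod (ρW.prod (ρz.prod ρz)))) := by
      rw [← law5 ⟨0, hN⟩ ⟨1, hN2⟩ h01]
      exact (memLp_map_measure_iff hK2m.aestronglyMeasurable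
        (htuple5 _ _).aemeasurable).mpr (hYL2 ⟨1, hN2⟩)
    have hKint : Integrable (fun t : A × (A × ((Fin p → Fin q → ℝ) ×
        (((Fin p → ℝ) × (Fin q → ℝ)) × ((Fin p → ℝ) × (Fin q → ℝ))))) =>
        g t.1 (flipPert t.2.2.1 t.2.2.2.1) * g t.2.1 (flipPert t.2.2.1 t.2.2.2.2))
        (ρx.prod (ρx.prod (ρW.prod (ρz.prod ρz)))) :=
      memLp_one_iff_integrable.mp (MemLp.smul (r := 1) hK2L2 hK1L2)
    -- the mean function a ↦ ∫ w ∫ z g a (flipPert w z)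
    have hG3int : Integrable (fun t : A × ((Fin p → Fin q → ℝ) × ((Fin p → ℝ) × (Fin q → ℝ))) =>
        g t.1 (flipPert t.2.1 t.2.2)) (ρx.prod (ρW.prod ρz)) :=
      hG3L2.integrable one_le_two
    have hmae : ∀ᵐ a ∂ρx, Integrable
        (fun wz : (Fin p → Fin q → ℝ) × ((Fin p → ℝ) × (Fin q → ℝ)) =>
          g a (flipPert wz.1 wz.2)) (ρW.prod ρz) := hG3int.prod_right_ae
    have hm2 : Integrable (fun a => ∫ wz, g a (flipPert wz.1 wz.2) ∂(ρW.prod ρz)) ρx :=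
      hG3int.integral_prod_left
    have hmeq : ∀ᵐ a ∂ρx, (∫ wz, g a (flipPert wz.1 wz.2) ∂(ρW.prod ρz))
        = ∫ w, ∫ z, g a (flipPert w z) ∂ρz ∂ρW := by
      filter_upwards [hmae] with a ha
      exact integral_prod _ ha
    have hm_int : Integrable (fun a => ∫ w, ∫ z, g a (flipPert w z) ∂ρz ∂ρW) ρx :=
      hm2.congr hmeq
    have hI1m : ∫ a, (∫ w, ∫ z, g a (flipPert w z) ∂ρz ∂ρW) ∂ρx = I1 := by
      rw [hI1, integral_prod _ hG3int]
      exact integral_congr_ae (by filter_upwards [hmeq] with a h; exact h.symm)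
    -- the key covariance computation
    have hKey : (∫ a, ∫ a',
          ((∫ w, (∫ z, g a (flipPert w z) ∂ρz) * (∫ z, g a' (flipPert w z) ∂ρz) ∂ρW)
            - (∫ w, ∫ z, g a (flipPert w z) ∂ρz ∂ρW) *
              (∫ w, ∫ z, g a' (flipPert w z) ∂ρz ∂ρW)) ∂ρx ∂ρx)
        = C5 - I1 * I1 := by
      have h4 := hKint.prod_right_ae
      have houter : ∀ᵐ a ∂ρx,
          (∫ a', ((∫ w, (∫ z, g a (flipPert w z) ∂ρz) * (∫ z, g a' (flipPert w z) ∂ρz) ∂ρW)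
            - (∫ w, ∫ z, g a (flipPert w z) ∂ρz ∂ρW) *
              (∫ w, ∫ z, g a' (flipPert w z) ∂ρz ∂ρW)) ∂ρx)
          = (∫ t4, g a (flipPert t4.2.1 t4.2.2.1) * g t4.1 (flipPert t4.2.1 t4.2.2.2)
              ∂(ρx.prod (ρW.prod (ρz.prod ρz))))
            - (∫ w, ∫ z, g a (flipPert w z) ∂ρz ∂ρW) * I1 := by
        filter_upwards [h4] with a ha
        have h3 := ha.prod_right_ae
        have hTeq : ∀ᵐ a' ∂ρx,
            (∫ t3, g a (flipPert t3.1 t3.2.1) * g a' (flipPert t3.1 t3.2.2)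
              ∂(ρW.prod (ρz.prod ρz)))
            = ∫ w, (∫ z, g a (flipPert w z) ∂ρz) * (∫ z, g a' (flipPert w z) ∂ρz) ∂ρW := by
          filter_upwards [h3] with a' ha'
          rw [integral_prod _ ha']
          refine integral_congr_ae ?_
          filter_upwards [ha'.prod_right_ae] with w hw
          rw [integral_prod _ hw]
          simp_rw [integral_const_mul]
          rw [integral_mul_const]
        have hTint : Integrable (fun a' =>
            ∫ t3, g a (flipPert t3.1 t3.2.1) * g a' (flipPert t3.1 t3.2.2)
              ∂(ρW.prod (ρz.prod ρz))) ρx := ha.integral_prod_left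
        have hsplit : (∫ t4, g a (flipPert t4.2.1 t4.2.2.1) * g t4.1 (flipPert t4.2.1 t4.2.2.2)
              ∂(ρx.prod (ρW.prod (ρz.prod ρz))))
            = ∫ a', (∫ t3, g a (flipPert t3.1 t3.2.1) * g a' (flipPert t3.1 t3.2.2)
              ∂(ρW.prod (ρz.prod ρz))) ∂ρx := by
          rw [integral_prod _ ha]
        calc (∫ a', ((∫ w, (∫ z, g a (flipPert w z) ∂ρz) * (∫ z, g a' (flipPert w z) ∂ρz) ∂ρW)
              - (∫ w, ∫ z, g a (flipPert w z) ∂ρz ∂ρW) *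
                (∫ w, ∫ z, g a' (flipPert w z) ∂ρz ∂ρW)) ∂ρx)
            = ∫ a', ((∫ t3, g a (flipPert t3.1 t3.2.1) * g a' (flipPert t3.1 t3.2.2)
                ∂(ρW.prod (ρz.prod ρz)))
              - (∫ w, ∫ z, g a (flipPert w z) ∂ρz ∂ρW) *
                (∫ w, ∫ z, g a' (flipPert w z) ∂ρz ∂ρW)) ∂ρx := by
              refine integral_congr_ae ?_
              filter_upwards [hTeq] with a' h
              rw [h]
          _ = (∫ a', (∫ t3, g a (flipPert t3.1 t3.2.1) * g a' (flipPert t3.1 t3.2.2)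
                ∂(ρW.prod (ρz.prod ρz))) ∂ρx)
              - ∫ a', ((∫ w, ∫ z, g a (flipPert w z) ∂ρz ∂ρW) *
                (∫ w, ∫ z, g a' (flipPert w z) ∂ρz ∂ρW)) ∂ρx :=
              integral_sub hTint (hm_int.const_mul _)
          _ = (∫ t4, g a (flipPert t4.2.1 t4.2.2.1) * g t4.1 (flipPert t4.2.1 t4.2.2.2)
                ∂(ρx.prod (ρW.prod (ρz.prod ρz))))
              - (∫ w, ∫ z, g a (flipPert w z) ∂ρz ∂ρW) * I1 := by
              rw [← hsplit, integral_const_mul, hI1m]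
      calc (∫ a, ∫ a',
            ((∫ w, (∫ z, g a (flipPert w z) ∂ρz) * (∫ z, g a' (flipPert w z) ∂ρz) ∂ρW)
              - (∫ w, ∫ z, g a (flipPert w z) ∂ρz ∂ρW) *
                (∫ w, ∫ z, g a' (flipPert w z) ∂ρz ∂ρW)) ∂ρx ∂ρx)
          = ∫ a, ((∫ t4, g a (flipPert t4.2.1 t4.2.2.1) * g t4.1 (flipPert t4.2.1 t4.2.2.2)
                ∂(ρx.prod (ρW.prod (ρz.prod ρz))))
              - (∫ w, ∫ z, g a (flipPert w z) ∂ρz ∂ρW) * I1) ∂ρx :=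
            integral_congr_ae houter
        _ = (∫ a, (∫ t4, g a (flipPert t4.2.1 t4.2.2.1) * g t4.1 (flipPert t4.2.1 t4.2.2.2)
                ∂(ρx.prod (ρW.prod (ρz.prod ρz)))) ∂ρx)
            - ∫ a, ((∫ w, ∫ z, g a (flipPert w z) ∂ρz ∂ρW) * I1) ∂ρx :=
            integral_sub hKint.integral_prod_left (hm_int.mul_const _)
        _ = C5 - I1 * I1 := by
            have h5 : ∫ a, (∫ t4, g a (flipPert t4.2.1 t4.2.2.1) *
                g t4.1 (flipPert t4.2.1 t4.2.2.2) ∂(ρx.prod (ρW.prod (ρz.prod ρz)))) ∂ρx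
                = C5 := by
              rw [hC5, integral_prod _ hKint]
            rw [h5, integral_mul_const, hI1m]
    -- expectations of the empirical mean
    have hNne : (N : ℝ) ≠ 0 := Nat.cast_ne_zero.mpr hN.ne'
    have hMean : ∫ ω, ((N : ℝ)⁻¹ * ∑ n, g (x n ω) (flipPert (W ω) (r n ω, s n ω))) ∂μ
        = I1 := by
      rw [integral_const_mul, integral_finset_sum _ (fun n _ => hYint n),
        Finset.sum_congr rfl (fun n _ => hIm n), Finset.sum_const, Finset.card_univ,
        Fintype.card_fin, nsmul_eq_mul]
      field_simp
    have hMeanSq : ∫ ω, (((N : ℝ)⁻¹ * ∑ n, g (x n ω) (flipPert (W ω) (r n ω, s n ω))) *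
          ((N : ℝ)⁻¹ * ∑ n, g (x n ω) (flipPert (W ω) (r n ω, s n ω)))) ∂μ
        = (N : ℝ)⁻¹ * (N : ℝ)⁻¹ * ((N : ℝ) * I2 + ((N : ℝ) * (N : ℝ) - (N : ℝ)) * C5) := by
      have hrw : ∀ ω : Ω, (((N : ℝ)⁻¹ * ∑ n, g (x n ω) (flipPert (W ω) (r n ω, s n ω))) *
          ((N : ℝ)⁻¹ * ∑ n, g (x n ω) (flipPert (W ω) (r n ω, s n ω))))
          = (N : ℝ)⁻¹ * ((N : ℝ)⁻¹ * (∑ n, ∑ m, g (x n ω) (flipPert (W ω) (r n ω, s n ω)) *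
            g (x m ω) (flipPert (W ω) (r m ω, s m ω)))) := by
        intro ω
        rw [← Finset.sum_mul_sum]
        ring
      simp_rw [hrw]
      rw [integral_const_mul, integral_const_mul,
        integral_finset_sum _ (fun n _ => integrable_finset_sum _ (fun m _ => hYmul n m)),
        Finset.sum_congr rfl (fun n _ => integral_finset_sum _ (fun m _ => hYmul n m)),
        Finset.sum_congr rfl (fun n _ => Finset.sum_congr rfl (fun m _ => hInm n m))]
      have hsum : ∀ n : Fin N, (∑ m, if n = m then I2 else C5) = C5 * N + (I2 - C5) := by
        intro n
        have hpt : ∀ m : Fin N, (if n = m then I2 else C5)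
            = C5 + (if n = m then I2 - C5 else 0) := by
          intro m
          split <;> ring
        rw [Finset.sum_congr rfl (fun m _ => hpt m), Finset.sum_add_distrib,
          Finset.sum_const, Finset.sum_ite_eq Finset.univ n (fun _ => I2 - C5)]
        simp [Finset.card_univ, mul_comm]
      rw [Finset.sum_congr rfl (fun n _ => hsum n), Finset.sum_const, Finset.card_univ,
        Fintype.card_fin, nsmul_eq_mul]
      ring
    -- put everything together
    have hMeanL2 : MemLp (fun ω =>
        (N : ℝ)⁻¹ * ∑ n, g (x n ω) (flipPert (W ω) (r n ω, s n ω))) 2 μ :=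
      MemLp.const_mul (memLp_finset_sum (ε' := ℝ) Finset.univ
        (f := fun n ω => g (x n ω) (flipPert (W ω) (r n ω, s n ω))) (fun n _ => hYL2 n)) _
    rw [variance_eq_sub hMeanL2, variance_eq_sub hL2]
    simp only [Pi.pow_apply, pow_two]
    rw [hMeanSq, hMean, hKey, hIsq ⟨0, hN⟩, hIm ⟨0, hN⟩]
    field_simp
    ring
end

section
/- (Flipout reduces variance) Under the setup of the variance decomposition theorem, Var_shared(G_B) − Var_flipout(G_B) = ((N-1)/N)·β, where β = E_{x,x',Ŵ}[Cov_{r,s}(g(x,Δ), g(x',Δ) | x, x', Ŵ)] with Δ = Ŵ ∘ r sᵀ shared between the two examples. In particular, if β ≥ 0 then flipout never increases the variance of the averaged gradient. -/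
open MeasureTheory ProbabilityTheory Filter
open scoped BigOperators

/-- curried form of `g` applied to a flipout perturbation, as a function on a product space -/
def G2 {A : Type} {p q : ℕ} (g : A → (Fin p → Fin q → ℝ) → ℝ)
    (t : A × ((Fin p → Fin q → ℝ) × ((Fin p → ℝ) × (Fin q → ℝ)))) : ℝ :=
  g t.1 (flipPert t.2.1 t.2.2)

lemma indepFun_nested' {Ω ι : Type*} [MeasurableSpace Ω] {μ : Measure Ω}
    {β : ι → Type*} {m : ∀ i, MeasurableSpace (β i)} {f : ∀ i, Ω → β i}
    (h : iIndepFun (m := m) f μ) (hmeas : ∀ i, Measurable (f i))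
    (i : ι) (T : Finset ι) (hi : i ∉ T)
    {γ : Type*} [MeasurableSpace γ]
    (φ : (∀ t : T, β t) → γ) (hφ : Measurable φ) :
    IndepFun (f i) (fun ω => φ (fun t => f t ω)) μ := by
  classical
  have h1 := (h.indepFun_finset {i} T (Finset.disjoint_singleton_left.mpr hi) hmeas).comp
    (measurable_pi_apply (⟨i, Finset.mem_singleton_self i⟩ : ({i} : Finset ι))) hφ
  exact h1

lemma indep_tuple₂ {Ω ι : Type*} [MeasurableSpace Ω] {μ : Measure Ω}
    {β : ι → Type*} {m : ∀ i, MeasurableSpace (β i)} {f : ∀ i, Ω → β i}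
    (h : iIndepFun (m := m) f μ) (hmeas : ∀ i, Measurable (f i))
    (i j k : ι) (hij : i ≠ j) (hik : i ≠ k) :
    IndepFun (f i) (fun ω => (f j ω, f k ω)) μ :=
  (h.indepFun_prodMk hmeas j k i (fun e => hij e.symm) (fun e => hik e.symm)).symm

lemma indep_tuple₃ {Ω ι : Type*} [MeasurableSpace Ω] {μ : Measure Ω}
    {β : ι → Type*} {m : ∀ i, MeasurableSpace (β i)} {f : ∀ i, Ω → β i}
    (h : iIndepFun (m := m) f μ) (hmeas : ∀ i, Measurable (f i))
    (i j k l : ι) (hij : i ≠ j) (hik : i ≠ k) (hil : i ≠ l) :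
    IndepFun (f i) (fun ω => (f j ω, (f k ω, f l ω))) μ := by
  classical
  let φ : (∀ t : ({j, k, l} : Finset ι), β t) → β j × (β k × β l) := fun v =>
    (v ⟨j, by simp⟩, (v ⟨k, by simp⟩, v ⟨l, by simp⟩))
  have hφ : Measurable φ := by fun_prop
  exact indepFun_nested' h hmeas i {j, k, l} (by simp [hij, hik, hil]) φ hφ

lemma indep_tuple₄ {Ω ι : Type*} [MeasurableSpace Ω] {μ : Measure Ω}
    {β : ι → Type*} {m : ∀ i, MeasurableSpace (β i)} {f : ∀ i, Ω → β i}
    (h : iIndepFun (m := m) f μ) (hmeas : ∀ i, Measurable (f i))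
    (i j k l o : ι) (hij : i ≠ j) (hik : i ≠ k) (hil : i ≠ l) (hio : i ≠ o) :
    IndepFun (f i) (fun ω => (f j ω, (f k ω, (f l ω, f o ω)))) μ := by
  classical
  let φ : (∀ t : ({j, k, l, o} : Finset ι), β t) → β j × (β k × (β l × β o)) := fun v =>
    (v ⟨j, by simp⟩, (v ⟨k, by simp⟩, (v ⟨l, by simp⟩, v ⟨o, by simp⟩)))
  have hφ : Measurable φ := by fun_prop
  exact indepFun_nested' h hmeas i {j, k, l, o} (by simp [hij, hik, hil, hio]) φ hφ

lemma integrable_mul_of_memL2' {α : Type*} [MeasurableSpace α] {μ : Measure α}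
    {f g : α → ℝ} (hf : MemLp f 2 μ) (hg : MemLp g 2 μ) :
    Integrable (fun ω => f ω * g ω) μ := by
  have h1 := hf.integrable_sq
  have h2 := hg.integrable_sq
  refine (h1.add h2).mono' (hf.aestronglyMeasurable.mul hg.aestronglyMeasurable) ?_
  filter_upwards with ω
  rw [Real.norm_eq_abs, abs_mul]
  simp only [Pi.add_apply]
  nlinarith [sq_nonneg (|f ω| - |g ω|), sq_abs (f ω), sq_abs (g ω),
    abs_nonneg (f ω), abs_nonneg (g ω)]

lemma var_diff {Ω : Type*} [MeasurableSpace Ω] (μ : Measure Ω) [IsProbabilityMeasure μ]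
    {N : ℕ} (hN : 0 < N) (f e : Fin N → Ω → ℝ)
    (hf : ∀ n, MemLp (f n) 2 μ) (he : ∀ n, MemLp (e n) 2 μ)
    (hmean : ∀ n, ∫ ω, f n ω ∂μ = ∫ ω, e n ω ∂μ)
    (hdiag : ∀ n, ∫ ω, f n ω * f n ω ∂μ = ∫ ω, e n ω * e n ω ∂μ)
    (S F : ℝ)
    (hS : ∀ n m, n ≠ m → ∫ ω, f n ω * f m ω ∂μ = S)
    (hF : ∀ n m, n ≠ m → ∫ ω, e n ω * e m ω ∂μ = F) :
    variance (fun ω => (N:ℝ)⁻¹ * ∑ n, f n ω) μ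
      - variance (fun ω => (N:ℝ)⁻¹ * ∑ n, e n ω) μ
      = ((N:ℝ) - 1) / N * (S - F) := by
  have hNR : (N:ℝ) ≠ 0 := Nat.cast_ne_zero.mpr hN.ne'
  have key : ∀ u : Fin N → Ω → ℝ, (∀ n, MemLp (u n) 2 μ) →
      variance (fun ω => (N:ℝ)⁻¹ * ∑ n, u n ω) μ
        = (N:ℝ)⁻¹^2 * (∑ n, ∑ m, ∫ ω, u n ω * u m ω ∂μ)
          - ((N:ℝ)⁻¹ * ∑ n, ∫ ω, u n ω ∂μ)^2 := by
    intro u hu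
    have hsum : MemLp (fun ω => ∑ n, u n ω) 2 μ := memLp_finset_sum _ (fun i _ => hu i)
    have hX : MemLp (fun ω => (N:ℝ)⁻¹ * ∑ n, u n ω) 2 μ := hsum.const_mul _
    have h2 : (∫ ω, ((fun ω => (N:ℝ)⁻¹ * ∑ n, u n ω) ^ 2) ω ∂μ)
        = (N:ℝ)⁻¹^2 * (∑ n, ∑ m, ∫ ω, u n ω * u m ω ∂μ) := by
      have hpt : ∀ ω, ((fun ω => (N:ℝ)⁻¹ * ∑ n, u n ω) ^ 2) ω
          = (N:ℝ)⁻¹^2 * ∑ n, ∑ m, u n ω * u m ω := by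
        intro ω
        simp only [Pi.pow_apply]
        rw [mul_pow, sq (∑ n, u n ω), Finset.sum_mul_sum]
      rw [integral_congr_ae (Eventually.of_forall hpt), integral_const_mul]
      congr 1
      rw [integral_finset_sum _ (fun n _ =>
        integrable_finset_sum _ (fun m _ => integrable_mul_of_memL2' (hu n) (hu m)))]
      exact Finset.sum_congr rfl fun n _ => by
        rw [integral_finset_sum _ (fun m _ => integrable_mul_of_memL2' (hu n) (hu m))]
    have h1 : (∫ ω, (N:ℝ)⁻¹ * ∑ n, u n ω ∂μ) = (N:ℝ)⁻¹ * ∑ n, ∫ ω, u n ω ∂μ := by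
      rw [integral_const_mul, integral_finset_sum _ (fun n _ => (hu n).integrable one_le_two)]
    rw [variance_eq_sub hX]
    rw [h2, h1]
  rw [key f hf, key e he]
  have hmean' : (∑ n, ∫ ω, f n ω ∂μ) = ∑ n, ∫ ω, e n ω ∂μ :=
    Finset.sum_congr rfl fun n _ => hmean n
  rw [hmean']
  have hdd : (∑ n, ∑ m, ∫ ω, f n ω * f m ω ∂μ) - (∑ n, ∑ m, ∫ ω, e n ω * e m ω ∂μ)
      = (N:ℝ) * (((N:ℝ) - 1) * (S - F)) := by
    rw [← Finset.sum_sub_distrib]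
    have hrow : ∀ n : Fin N,
        ((∑ m, ∫ ω, f n ω * f m ω ∂μ) - ∑ m, ∫ ω, e n ω * e m ω ∂μ)
          = ((N:ℝ) - 1) * (S - F) := by
      intro n
      rw [← Finset.sum_sub_distrib]
      have hterm : ∀ m : Fin N, ((∫ ω, f n ω * f m ω ∂μ) - ∫ ω, e n ω * e m ω ∂μ)
          = if n = m then 0 else (S - F) := by
        intro m
        by_cases h : n = m
        · subst h; simp [hdiag n]
        · simp [h, hS n m h, hF n m h]
      rw [Finset.sum_congr rfl fun m _ => hterm m]
      have : (∑ m : Fin N, if n = m then (0:ℝ) else (S - F))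
          = (∑ m : Fin N, (S - F)) - ∑ m : Fin N, (if n = m then (S - F) else 0) := by
        rw [← Finset.sum_sub_distrib]
        refine Finset.sum_congr rfl fun m _ => ?_
        by_cases h : n = m <;> simp [h]
      rw [this, Finset.sum_const, Finset.sum_ite_eq]
      simp [Finset.card_univ]
      ring
    rw [Finset.sum_congr rfl fun n _ => hrow n, Finset.sum_const, Finset.card_univ]
    simp [mul_comm]
  have hgoal : ((N:ℝ) - 1) / N * (S - F)
      = (N:ℝ)⁻¹^2 * ((N:ℝ) * (((N:ℝ)-1) * (S-F))) := by
    field_simp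
  rw [hgoal, ← hdd]
  ring

lemma beta_split {A WT ZT : Type*} [MeasurableSpace A] [MeasurableSpace WT] [MeasurableSpace ZT]
    (ν : Measure A) (κ : Measure WT) (ρ : Measure ZT)
    [SFinite ν] [SFinite κ] [SFinite ρ]
    (G : A × (WT × ZT) → ℝ)
    (hH : Integrable (fun t : A × (A × (WT × ZT)) => G (t.1, t.2.2) * G (t.2.1, t.2.2))
      (ν.prod (ν.prod (κ.prod ρ))))
    (hK : Integrable (fun t : A × (A × (WT × (ZT × ZT))) =>
        G (t.1, (t.2.2.1, t.2.2.2.1)) * G (t.2.1, (t.2.2.1, t.2.2.2.2)))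
      (ν.prod (ν.prod (κ.prod (ρ.prod ρ))))) :
    ∫ a, ∫ a', ∫ w, ((∫ z, G (a, (w, z)) * G (a', (w, z)) ∂ρ)
        - (∫ z, G (a, (w, z)) ∂ρ) * (∫ z, G (a', (w, z)) ∂ρ)) ∂κ ∂ν ∂ν
      = (∫ t, G (t.1, t.2.2) * G (t.2.1, t.2.2) ∂(ν.prod (ν.prod (κ.prod ρ))))
        - ∫ t, G (t.1, (t.2.2.1, t.2.2.2.1)) * G (t.2.1, (t.2.2.1, t.2.2.2.2))
            ∂(ν.prod (ν.prod (κ.prod (ρ.prod ρ)))) := by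
  calc ∫ a, ∫ a', ∫ w, ((∫ z, G (a, (w, z)) * G (a', (w, z)) ∂ρ)
        - (∫ z, G (a, (w, z)) ∂ρ) * (∫ z, G (a', (w, z)) ∂ρ)) ∂κ ∂ν ∂ν
      = ∫ a, ((∫ t, G (a, t.2) * G (t.1, t.2) ∂(ν.prod (κ.prod ρ)))
          - ∫ t, G (a, (t.2.1, t.2.2.1)) * G (t.1, (t.2.1, t.2.2.2))
              ∂(ν.prod (κ.prod (ρ.prod ρ)))) ∂ν := by
        apply integral_congr_ae
        filter_upwards [hH.prod_right_ae, hK.prod_right_ae] with a ha hka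
        calc ∫ a', ∫ w, ((∫ z, G (a, (w, z)) * G (a', (w, z)) ∂ρ)
              - (∫ z, G (a, (w, z)) ∂ρ) * (∫ z, G (a', (w, z)) ∂ρ)) ∂κ ∂ν
            = ∫ a', ((∫ u, G (a, u) * G (a', u) ∂(κ.prod ρ))
                - ∫ u, G (a, (u.1, u.2.1)) * G (a', (u.1, u.2.2))
                    ∂(κ.prod (ρ.prod ρ))) ∂ν := by
              apply integral_congr_ae
              filter_upwards [ha.prod_right_ae, hka.prod_right_ae] with a' ha' hka'
              have eF : ∀ w : WT, (∫ zz : ZT × ZT,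
                    G (a, (w, zz.1)) * G (a', (w, zz.2)) ∂(ρ.prod ρ))
                  = (∫ z, G (a, (w, z)) ∂ρ) * (∫ z, G (a', (w, z)) ∂ρ) := fun w =>
                integral_prod_mul (f := fun z => G (a, (w, z))) (g := fun z => G (a', (w, z)))
              have i1 : Integrable (fun w => ∫ z, G (a, (w, z)) * G (a', (w, z)) ∂ρ) κ :=
                ha'.integral_prod_left
              have i2 : Integrable
                  (fun w => (∫ z, G (a, (w, z)) ∂ρ) * (∫ z, G (a', (w, z)) ∂ρ)) κ :=
                hka'.integral_prod_left.congr (Eventually.of_forall eF)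
              calc ∫ w, ((∫ z, G (a, (w, z)) * G (a', (w, z)) ∂ρ)
                    - (∫ z, G (a, (w, z)) ∂ρ) * (∫ z, G (a', (w, z)) ∂ρ)) ∂κ
                  = (∫ w, ∫ z, G (a, (w, z)) * G (a', (w, z)) ∂ρ ∂κ)
                    - ∫ w, (∫ z, G (a, (w, z)) ∂ρ) * (∫ z, G (a', (w, z)) ∂ρ) ∂κ :=
                    integral_sub i1 i2
                _ = (∫ u, G (a, u) * G (a', u) ∂(κ.prod ρ))
                    - ∫ u, G (a, (u.1, u.2.1)) * G (a', (u.1, u.2.2))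
                        ∂(κ.prod (ρ.prod ρ)) := by
                    congr 1
                    · exact (integral_prod _ ha').symm
                    · refine ((integral_prod _ hka').trans ?_).symm
                      exact integral_congr_ae (Eventually.of_forall eF)
          _ = (∫ t, G (a, t.2) * G (t.1, t.2) ∂(ν.prod (κ.prod ρ)))
              - ∫ t, G (a, (t.2.1, t.2.2.1)) * G (t.1, (t.2.1, t.2.2.2))
                  ∂(ν.prod (κ.prod (ρ.prod ρ))) := by
              rw [integral_sub ha.integral_prod_left hka.integral_prod_left]
              congr 1
              · exact (integral_prod _ ha).symm
              · exact (integral_prod _ hka).symm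
    _ = (∫ t, G (t.1, t.2.2) * G (t.2.1, t.2.2) ∂(ν.prod (ν.prod (κ.prod ρ))))
        - ∫ t, G (t.1, (t.2.2.1, t.2.2.2.1)) * G (t.2.1, (t.2.2.1, t.2.2.2.2))
            ∂(ν.prod (ν.prod (κ.prod (ρ.prod ρ)))) := by
        rw [integral_sub hH.integral_prod_left hK.integral_prod_left]
        congr 1
        · exact (integral_prod _ hH).symm
        · exact (integral_prod _ hK).symm

/-- Flipout reduces variance: with a common base perturbation `Ŵ`, the
difference between the variance of the mini-batch gradient average under a
single shared sign matrix and under per-example flipout sign matrices equals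
`((N-1)/N)·β`; in particular if `β ≥ 0`, flipout never increases the
variance. -/
theorem flipout_reduces_variance
    {Ω A : Type} [MeasurableSpace Ω] [MeasurableSpace A]
    (μ : Measure Ω) [IsProbabilityMeasure μ]
    {N p q : ℕ} (hN : 0 < N)
    (x : Fin N → Ω → A) (W : Ω → Fin p → Fin q → ℝ)
    -- per-example flipout sign vectors
    (r : Fin N → Ω → Fin p → ℝ) (s : Fin N → Ω → Fin q → ℝ)
    -- shared sign vectors
    (rsh : Ω → Fin p → ℝ) (ssh : Ω → Fin q → ℝ)
    (g : A → (Fin p → Fin q → ℝ) → ℝ)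
    (hx : ∀ n, Measurable (x n)) (hW : Measurable W)
    (hr : ∀ n, Measurable (r n)) (hs : ∀ n, Measurable (s n))
    (hrsh : Measurable rsh) (hssh : Measurable ssh)
    (hg : Measurable (Function.uncurry g))
    (hrsign : ∀ n ω i, r n ω i = 1 ∨ r n ω i = -1)
    (hssign : ∀ n ω j, s n ω j = 1 ∨ s n ω j = -1)
    (hrshsign : ∀ ω i, rsh ω i = 1 ∨ rsh ω i = -1)
    (hsshsign : ∀ ω j, ssh ω j = 1 ∨ ssh ω j = -1)
    -- inputs, per-example sign pairs, shared sign pair, and base perturbation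
    -- are all jointly independent
    (hjoint : iIndepFun
      (β := fun i : Fin N ⊕ Fin N ⊕ Unit ⊕ Unit =>
        match i with
        | .inl _ => A
        | .inr (.inl _) => (Fin p → ℝ) × (Fin q → ℝ)
        | .inr (.inr (.inl _)) => (Fin p → ℝ) × (Fin q → ℝ)
        | .inr (.inr (.inr _)) => Fin p → Fin q → ℝ)
      (m := fun i => match i with
        | .inl _ => inferInstance
        | .inr (.inl _) => inferInstance
        | .inr (.inr (.inl _)) => inferInstance
        | .inr (.inr (.inr _)) => inferInstance)
      (fun i => match i with
        | .inl n => x n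
        | .inr (.inl n) => fun ω => (r n ω, s n ω)
        | .inr (.inr (.inl _)) => fun ω => (rsh ω, ssh ω)
        | .inr (.inr (.inr _)) => W) μ)
    -- identical distributions: the inputs are i.i.d., and all sign pairs
    -- (flipout and shared) share a common distribution
    (hxid : ∀ n, Measure.map (x n) μ = Measure.map (x ⟨0, hN⟩) μ)
    (hrsid : ∀ n, Measure.map (fun ω => (r n ω, s n ω)) μ
      = Measure.map (fun ω => (rsh ω, ssh ω)) μ)
    -- square integrability
    (hL2sh : MemLp (fun ω =>
      g (x ⟨0, hN⟩ ω) (flipPert (W ω) (rsh ω, ssh ω))) 2 μ)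
    (hL2fl : MemLp (fun ω =>
      g (x ⟨0, hN⟩ ω) (flipPert (W ω) (r ⟨0, hN⟩ ω, s ⟨0, hN⟩ ω))) 2 μ) :
    (variance (fun ω =>
        (N : ℝ)⁻¹ * ∑ n, g (x n ω) (flipPert (W ω) (rsh ω, ssh ω))) μ
      - variance (fun ω =>
          (N : ℝ)⁻¹ * ∑ n, g (x n ω) (flipPert (W ω) (r n ω, s n ω))) μ
      = ((N : ℝ) - 1) / N *
          ∫ a, ∫ a', ∫ w,
            ((∫ z, g a (flipPert w z) * g a' (flipPert w z)
                ∂(Measure.map (fun ω => (rsh ω, ssh ω)) μ))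
              - (∫ z, g a (flipPert w z)
                  ∂(Measure.map (fun ω => (rsh ω, ssh ω)) μ)) *
                (∫ z, g a' (flipPert w z)
                  ∂(Measure.map (fun ω => (rsh ω, ssh ω)) μ)))
            ∂(Measure.map W μ)
            ∂(Measure.map (x ⟨0, hN⟩) μ) ∂(Measure.map (x ⟨0, hN⟩) μ)) ∧
    ((0 : ℝ) ≤
        (∫ a, ∫ a', ∫ w,
            ((∫ z, g a (flipPert w z) * g a' (flipPert w z)
                ∂(Measure.map (fun ω => (rsh ω, ssh ω)) μ))
              - (∫ z, g a (flipPert w z)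
                  ∂(Measure.map (fun ω => (rsh ω, ssh ω)) μ)) *
                (∫ z, g a' (flipPert w z)
                  ∂(Measure.map (fun ω => (rsh ω, ssh ω)) μ)))
            ∂(Measure.map W μ)
            ∂(Measure.map (x ⟨0, hN⟩) μ) ∂(Measure.map (x ⟨0, hN⟩) μ)) →
      variance (fun ω =>
          (N : ℝ)⁻¹ * ∑ n, g (x n ω) (flipPert (W ω) (r n ω, s n ω))) μ
        ≤ variance (fun ω =>
            (N : ℝ)⁻¹ * ∑ n, g (x n ω) (flipPert (W ω) (rsh ω, ssh ω))) μ) := by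
  
  classical
  have hzm : ∀ n, Measurable (fun ω => (r n ω, s n ω)) := fun n => (hr n).prodMk (hs n)
  have hzshm : Measurable (fun ω => (rsh ω, ssh ω)) := hrsh.prodMk hssh
  have iWZ : IndepFun W (fun ω => (rsh ω, ssh ω)) μ :=
    hjoint.indepFun (i := Sum.inr (Sum.inr (Sum.inr ()))) (j := Sum.inr (Sum.inr (Sum.inl ())))
      (by simp)
  have iWZn : ∀ n, IndepFun W (fun ω => (r n ω, s n ω)) μ := fun n =>
    hjoint.indepFun (i := Sum.inr (Sum.inr (Sum.inr ()))) (j := Sum.inr (Sum.inl n)) (by simp)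
  have ind2sh : ∀ n : Fin N, IndepFun (x n) (fun ω => (W ω, (rsh ω, ssh ω))) μ := fun n =>
    indep_tuple₂ hjoint (by rintro (n | n | ⟨⟩ | ⟨⟩); exacts [hx n, hzm n, hzshm, hW])
      (Sum.inl n) (Sum.inr (Sum.inr (Sum.inr ()))) (Sum.inr (Sum.inr (Sum.inl ())))
      (by simp) (by simp)
  have ind2fl : ∀ n : Fin N, IndepFun (x n) (fun ω => (W ω, (r n ω, s n ω))) μ := fun n =>
    indep_tuple₂ hjoint (by rintro (n | n | ⟨⟩ | ⟨⟩); exacts [hx n, hzm n, hzshm, hW])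
      (Sum.inl n) (Sum.inr (Sum.inr (Sum.inr ()))) (Sum.inr (Sum.inl n))
      (by simp) (by simp)
  have ind3sh : ∀ n m : Fin N, n ≠ m →
      IndepFun (x n) (fun ω => (x m ω, (W ω, (rsh ω, ssh ω)))) μ := fun n m hnm =>
    indep_tuple₃ hjoint (by rintro (n | n | ⟨⟩ | ⟨⟩); exacts [hx n, hzm n, hzshm, hW])
      (Sum.inl n) (Sum.inl m) (Sum.inr (Sum.inr (Sum.inr ()))) (Sum.inr (Sum.inr (Sum.inl ())))
      (by simp [hnm]) (by simp) (by simp)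
  have iZZ : ∀ n m : Fin N, n ≠ m →
      IndepFun (fun ω => (r n ω, s n ω)) (fun ω => (r m ω, s m ω)) μ := fun n m hnm =>
    hjoint.indepFun (i := Sum.inr (Sum.inl n)) (j := Sum.inr (Sum.inl m)) (by simp [hnm])
  have iWZZ : ∀ n m : Fin N, IndepFun W
      (fun ω => ((r n ω, s n ω), (r m ω, s m ω))) μ := fun n m =>
    indep_tuple₂ hjoint (by rintro (n | n | ⟨⟩ | ⟨⟩); exacts [hx n, hzm n, hzshm, hW])
      (Sum.inr (Sum.inr (Sum.inr ()))) (Sum.inr (Sum.inl n)) (Sum.inr (Sum.inl m))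
      (by simp) (by simp)
  have ind3fl : ∀ n m : Fin N, IndepFun (x m)
      (fun ω => (W ω, ((r n ω, s n ω), (r m ω, s m ω)))) μ := fun n m =>
    indep_tuple₃ hjoint (by rintro (n | n | ⟨⟩ | ⟨⟩); exacts [hx n, hzm n, hzshm, hW])
      (Sum.inl m) (Sum.inr (Sum.inr (Sum.inr ()))) (Sum.inr (Sum.inl n)) (Sum.inr (Sum.inl m))
      (by simp) (by simp) (by simp)
  have ind4fl : ∀ n m : Fin N, n ≠ m → IndepFun (x n)
      (fun ω => (x m ω, (W ω, ((r n ω, s n ω), (r m ω, s m ω))))) μ := fun n m hnm =>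
    indep_tuple₄ hjoint (by rintro (n | n | ⟨⟩ | ⟨⟩); exacts [hx n, hzm n, hzshm, hW])
      (Sum.inl n) (Sum.inl m) (Sum.inr (Sum.inr (Sum.inr ()))) (Sum.inr (Sum.inl n))
      (Sum.inr (Sum.inl m)) (by simp [hnm]) (by simp) (by simp) (by simp)
  -- probability instances on the pushforwards
  haveI : IsProbabilityMeasure (Measure.map (x ⟨0, hN⟩) μ) := Measure.isProbabilityMeasure_map (hx _).aemeasurable
  haveI : IsProbabilityMeasure (Measure.map W μ) := Measure.isProbabilityMeasure_map hW.aemeasurable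
  haveI : IsProbabilityMeasure (Measure.map (fun ω => (rsh ω, ssh ω)) μ) := Measure.isProbabilityMeasure_map hzshm.aemeasurable
  have mapPair : ∀ {γ δ : Type} [MeasurableSpace γ] [MeasurableSpace δ]
      {f' : Ω → γ} {g' : Ω → δ}, Measurable f' → Measurable g' → IndepFun f' g' μ →
      Measure.map (fun ω => (f' ω, g' ω)) μ = (Measure.map f' μ).prod (Measure.map g' μ) := by
    intro γ δ _ _ f' g' hf' hg' h
    exact (indepFun_iff_map_prod_eq_prod_map_map hf'.aemeasurable hg'.aemeasurable).1 h
  -- laws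
  have L1sh : Measure.map (fun ω => (W ω, (rsh ω, ssh ω))) μ = (Measure.map W μ).prod (Measure.map (fun ω => (rsh ω, ssh ω)) μ) :=
    mapPair hW hzshm iWZ
  have L1fl : ∀ n, Measure.map (fun ω => (W ω, (r n ω, s n ω))) μ = (Measure.map W μ).prod (Measure.map (fun ω => (rsh ω, ssh ω)) μ) := fun n => by
    rw [← hrsid n]; exact mapPair hW (hzm n) (iWZn n)
  have L2sh : ∀ n, Measure.map (fun ω => (x n ω, (W ω, (rsh ω, ssh ω)))) μ
      = (Measure.map (x ⟨0, hN⟩) μ).prod ((Measure.map W μ).prod (Measure.map (fun ω => (rsh ω, ssh ω)) μ)) := fun n => by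
    rw [← L1sh, ← hxid n]; exact mapPair (hx n) (hW.prodMk hzshm) (ind2sh n)
  have L2fl : ∀ n, Measure.map (fun ω => (x n ω, (W ω, (r n ω, s n ω)))) μ
      = (Measure.map (x ⟨0, hN⟩) μ).prod ((Measure.map W μ).prod (Measure.map (fun ω => (rsh ω, ssh ω)) μ)) := fun n => by
    rw [← L1fl n, ← hxid n]; exact mapPair (hx n) (hW.prodMk (hzm n)) (ind2fl n)
  have L3sh : ∀ n m, n ≠ m →
      Measure.map (fun ω => (x n ω, (x m ω, (W ω, (rsh ω, ssh ω))))) μ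
        = (Measure.map (x ⟨0, hN⟩) μ).prod ((Measure.map (x ⟨0, hN⟩) μ).prod ((Measure.map W μ).prod (Measure.map (fun ω => (rsh ω, ssh ω)) μ))) := fun n m hnm => by
    rw [← L2sh m, ← hxid n]
    exact mapPair (hx n) ((hx m).prodMk (hW.prodMk hzshm)) (ind3sh n m hnm)
  have Lzz : ∀ n m, n ≠ m →
      Measure.map (fun ω => ((r n ω, s n ω), (r m ω, s m ω))) μ = (Measure.map (fun ω => (rsh ω, ssh ω)) μ).prod (Measure.map (fun ω => (rsh ω, ssh ω)) μ) := fun n m hnm =>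
    (mapPair (hzm n) (hzm m) (iZZ n m hnm)).trans (by rw [hrsid n, hrsid m])
  have LWzz : ∀ n m, n ≠ m →
      Measure.map (fun ω => (W ω, ((r n ω, s n ω), (r m ω, s m ω)))) μ
        = (Measure.map W μ).prod ((Measure.map (fun ω => (rsh ω, ssh ω)) μ).prod (Measure.map (fun ω => (rsh ω, ssh ω)) μ)) := fun n m hnm => by
    rw [← Lzz n m hnm]; exact mapPair hW ((hzm n).prodMk (hzm m)) (iWZZ n m)
  have L2fl2 : ∀ n m, n ≠ m →
      Measure.map (fun ω => (x m ω, (W ω, ((r n ω, s n ω), (r m ω, s m ω))))) μ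
        = (Measure.map (x ⟨0, hN⟩) μ).prod ((Measure.map W μ).prod ((Measure.map (fun ω => (rsh ω, ssh ω)) μ).prod (Measure.map (fun ω => (rsh ω, ssh ω)) μ))) := fun n m hnm => by
    rw [← LWzz n m hnm, ← hxid m]
    exact mapPair (hx m) (hW.prodMk ((hzm n).prodMk (hzm m))) (ind3fl n m)
  have L3fl : ∀ n m, n ≠ m →
      Measure.map (fun ω => (x n ω, (x m ω, (W ω, ((r n ω, s n ω), (r m ω, s m ω)))))) μ
        = (Measure.map (x ⟨0, hN⟩) μ).prod ((Measure.map (x ⟨0, hN⟩) μ).prod ((Measure.map W μ).prod ((Measure.map (fun ω => (rsh ω, ssh ω)) μ).prod (Measure.map (fun ω => (rsh ω, ssh ω)) μ)))) := fun n m hnm => by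
    rw [← L2fl2 n m hnm, ← hxid n]
    exact mapPair (hx n) ((hx m).prodMk (hW.prodMk ((hzm n).prodMk (hzm m)))) (ind4fl n m hnm)
  -- measurability of G2
  have hflip : Measurable (fun t : (Fin p → Fin q → ℝ) × ((Fin p → ℝ) × (Fin q → ℝ)) =>
      flipPert t.1 t.2) := by
    unfold flipPert
    fun_prop
  have hmG2 : Measurable (G2 g) := hg.comp (measurable_fst.prodMk (hflip.comp measurable_snd))
  have hTshm : ∀ n, Measurable (fun ω => (x n ω, (W ω, (rsh ω, ssh ω)))) := fun n =>
    (hx n).prodMk (hW.prodMk hzshm)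
  have hTflm : ∀ n, Measurable (fun ω => (x n ω, (W ω, (r n ω, s n ω)))) := fun n =>
    (hx n).prodMk (hW.prodMk (hzm n))
  have hG2L : MemLp (G2 g) 2 ((Measure.map (x ⟨0, hN⟩) μ).prod ((Measure.map W μ).prod (Measure.map (fun ω => (rsh ω, ssh ω)) μ))) := by
    rw [← L2sh ⟨0, hN⟩]
    exact (memLp_map_measure_iff hmG2.aestronglyMeasurable (hTshm _).aemeasurable).2 hL2sh
  have hMsh : ∀ n, MemLp (fun ω => g (x n ω) (flipPert (W ω) (rsh ω, ssh ω))) 2 μ := fun n =>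
    (memLp_map_measure_iff hmG2.aestronglyMeasurable (hTshm n).aemeasurable).1
      (by rw [L2sh n]; exact hG2L)
  have hMfl : ∀ n, MemLp (fun ω => g (x n ω) (flipPert (W ω) (r n ω, s n ω))) 2 μ := fun n =>
    (memLp_map_measure_iff hmG2.aestronglyMeasurable (hTflm n).aemeasurable).1
      (by rw [L2fl n]; exact hG2L)
  -- equal means
  have hmean : ∀ n, (∫ ω, g (x n ω) (flipPert (W ω) (rsh ω, ssh ω)) ∂μ)
      = ∫ ω, g (x n ω) (flipPert (W ω) (r n ω, s n ω)) ∂μ := by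
    intro n
    have h1 : (∫ ω, g (x n ω) (flipPert (W ω) (rsh ω, ssh ω)) ∂μ)
        = ∫ t, G2 g t ∂((Measure.map (x ⟨0, hN⟩) μ).prod ((Measure.map W μ).prod (Measure.map (fun ω => (rsh ω, ssh ω)) μ))) := by
      rw [← L2sh n]
      exact (integral_map (hTshm n).aemeasurable hmG2.aestronglyMeasurable).symm
    have h2 : (∫ ω, g (x n ω) (flipPert (W ω) (r n ω, s n ω)) ∂μ)
        = ∫ t, G2 g t ∂((Measure.map (x ⟨0, hN⟩) μ).prod ((Measure.map W μ).prod (Measure.map (fun ω => (rsh ω, ssh ω)) μ))) := by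
      rw [← L2fl n]
      exact (integral_map (hTflm n).aemeasurable hmG2.aestronglyMeasurable).symm
    rw [h1, h2]
  -- equal diagonal second moments
  have hmG2sq : Measurable (fun t => G2 g t * G2 g t) := hmG2.mul hmG2
  have hdiag : ∀ n, (∫ ω, g (x n ω) (flipPert (W ω) (rsh ω, ssh ω))
        * g (x n ω) (flipPert (W ω) (rsh ω, ssh ω)) ∂μ)
      = ∫ ω, g (x n ω) (flipPert (W ω) (r n ω, s n ω))
        * g (x n ω) (flipPert (W ω) (r n ω, s n ω)) ∂μ := by
    intro n
    have h1 : (∫ ω, g (x n ω) (flipPert (W ω) (rsh ω, ssh ω))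
          * g (x n ω) (flipPert (W ω) (rsh ω, ssh ω)) ∂μ)
        = ∫ t, G2 g t * G2 g t ∂((Measure.map (x ⟨0, hN⟩) μ).prod ((Measure.map W μ).prod (Measure.map (fun ω => (rsh ω, ssh ω)) μ))) := by
      rw [← L2sh n]
      exact (integral_map (hTshm n).aemeasurable hmG2sq.aestronglyMeasurable).symm
    have h2 : (∫ ω, g (x n ω) (flipPert (W ω) (r n ω, s n ω))
          * g (x n ω) (flipPert (W ω) (r n ω, s n ω)) ∂μ)
        = ∫ t, G2 g t * G2 g t ∂((Measure.map (x ⟨0, hN⟩) μ).prod ((Measure.map W μ).prod (Measure.map (fun ω => (rsh ω, ssh ω)) μ))) := by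
      rw [← L2fl n]
      exact (integral_map (hTflm n).aemeasurable hmG2sq.aestronglyMeasurable).symm
    rw [h1, h2]
  -- mixed moments
  have hHHm : Measurable (fun t : A × (A × ((Fin p → Fin q → ℝ)
        × ((Fin p → ℝ) × (Fin q → ℝ)))) => G2 g (t.1, t.2.2) * G2 g (t.2.1, t.2.2)) :=
    (hmG2.comp (measurable_fst.prodMk measurable_snd.snd)).mul
      (hmG2.comp (measurable_snd.fst.prodMk measurable_snd.snd))
  have hKKm : Measurable (fun t : A × (A × ((Fin p → Fin q → ℝ)
        × (((Fin p → ℝ) × (Fin q → ℝ)) × ((Fin p → ℝ) × (Fin q → ℝ))))) =>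
      G2 g (t.1, (t.2.2.1, t.2.2.2.1)) * G2 g (t.2.1, (t.2.2.1, t.2.2.2.2))) :=
    (hmG2.comp (measurable_fst.prodMk
      (measurable_snd.snd.fst.prodMk measurable_snd.snd.snd.fst))).mul
      (hmG2.comp (measurable_snd.fst.prodMk
        (measurable_snd.snd.fst.prodMk measurable_snd.snd.snd.snd)))
  have hSmom : ∀ n m, n ≠ m →
      (∫ ω, g (x n ω) (flipPert (W ω) (rsh ω, ssh ω))
          * g (x m ω) (flipPert (W ω) (rsh ω, ssh ω)) ∂μ)
        = ∫ t, G2 g (t.1, t.2.2) * G2 g (t.2.1, t.2.2)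
            ∂((Measure.map (x ⟨0, hN⟩) μ).prod ((Measure.map (x ⟨0, hN⟩) μ).prod ((Measure.map W μ).prod (Measure.map (fun ω => (rsh ω, ssh ω)) μ)))) := fun n m hnm => by
    rw [← L3sh n m hnm]
    exact (integral_map ((hx n).prodMk ((hx m).prodMk
      (hW.prodMk hzshm))).aemeasurable hHHm.aestronglyMeasurable).symm
  have hFmom : ∀ n m, n ≠ m →
      (∫ ω, g (x n ω) (flipPert (W ω) (r n ω, s n ω))
          * g (x m ω) (flipPert (W ω) (r m ω, s m ω)) ∂μ)
        = ∫ t, G2 g (t.1, (t.2.2.1, t.2.2.2.1)) * G2 g (t.2.1, (t.2.2.1, t.2.2.2.2))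
            ∂((Measure.map (x ⟨0, hN⟩) μ).prod ((Measure.map (x ⟨0, hN⟩) μ).prod ((Measure.map W μ).prod ((Measure.map (fun ω => (rsh ω, ssh ω)) μ).prod (Measure.map (fun ω => (rsh ω, ssh ω)) μ))))) := fun n m hnm => by
    rw [← L3fl n m hnm]
    exact (integral_map ((hx n).prodMk ((hx m).prodMk (hW.prodMk
      ((hzm n).prodMk (hzm m))))).aemeasurable hKKm.aestronglyMeasurable).symm
  -- the variance difference
  have key := var_diff μ hN
    (fun n ω => g (x n ω) (flipPert (W ω) (rsh ω, ssh ω)))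
    (fun n ω => g (x n ω) (flipPert (W ω) (r n ω, s n ω)))
    hMsh hMfl hmean hdiag
    (∫ t, G2 g (t.1, t.2.2) * G2 g (t.2.1, t.2.2) ∂((Measure.map (x ⟨0, hN⟩) μ).prod ((Measure.map (x ⟨0, hN⟩) μ).prod ((Measure.map W μ).prod (Measure.map (fun ω => (rsh ω, ssh ω)) μ)))))
    (∫ t, G2 g (t.1, (t.2.2.1, t.2.2.2.1)) * G2 g (t.2.1, (t.2.2.1, t.2.2.2.2))
        ∂((Measure.map (x ⟨0, hN⟩) μ).prod ((Measure.map (x ⟨0, hN⟩) μ).prod ((Measure.map W μ).prod ((Measure.map (fun ω => (rsh ω, ssh ω)) μ).prod (Measure.map (fun ω => (rsh ω, ssh ω)) μ))))))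
    hSmom hFmom
  have heq : (variance (fun ω =>
        (N : ℝ)⁻¹ * ∑ n, g (x n ω) (flipPert (W ω) (rsh ω, ssh ω))) μ
      - variance (fun ω =>
          (N : ℝ)⁻¹ * ∑ n, g (x n ω) (flipPert (W ω) (r n ω, s n ω))) μ
      = ((N : ℝ) - 1) / N *
          ∫ a, ∫ a', ∫ w,
            ((∫ z, g a (flipPert w z) * g a' (flipPert w z) ∂(Measure.map (fun ω => (rsh ω, ssh ω)) μ))
              - (∫ z, g a (flipPert w z) ∂(Measure.map (fun ω => (rsh ω, ssh ω)) μ)) *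
                (∫ z, g a' (flipPert w z) ∂(Measure.map (fun ω => (rsh ω, ssh ω)) μ)))
            ∂(Measure.map W μ) ∂(Measure.map (x ⟨0, hN⟩) μ) ∂(Measure.map (x ⟨0, hN⟩) μ)) := by
    by_cases hN2 : 2 ≤ N
    · have hne : (⟨0, hN⟩ : Fin N) ≠ ⟨1, hN2⟩ := by simp [Fin.ext_iff]
      have hHHint : Integrable (fun t : A × (A × ((Fin p → Fin q → ℝ)
            × ((Fin p → ℝ) × (Fin q → ℝ)))) => G2 g (t.1, t.2.2) * G2 g (t.2.1, t.2.2))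
          ((Measure.map (x ⟨0, hN⟩) μ).prod ((Measure.map (x ⟨0, hN⟩) μ).prod ((Measure.map W μ).prod (Measure.map (fun ω => (rsh ω, ssh ω)) μ)))) := by
        rw [← L3sh ⟨0, hN⟩ ⟨1, hN2⟩ hne]
        exact (integrable_map_measure hHHm.aestronglyMeasurable
          ((hx _).prodMk ((hx _).prodMk (hW.prodMk hzshm))).aemeasurable).2
          (integrable_mul_of_memL2' (hMsh ⟨0, hN⟩) (hMsh ⟨1, hN2⟩))
      have hKKint : Integrable (fun t : A × (A × ((Fin p → Fin q → ℝ)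
            × (((Fin p → ℝ) × (Fin q → ℝ)) × ((Fin p → ℝ) × (Fin q → ℝ))))) =>
          G2 g (t.1, (t.2.2.1, t.2.2.2.1)) * G2 g (t.2.1, (t.2.2.1, t.2.2.2.2)))
          ((Measure.map (x ⟨0, hN⟩) μ).prod ((Measure.map (x ⟨0, hN⟩) μ).prod ((Measure.map W μ).prod ((Measure.map (fun ω => (rsh ω, ssh ω)) μ).prod (Measure.map (fun ω => (rsh ω, ssh ω)) μ))))) := by
        rw [← L3fl ⟨0, hN⟩ ⟨1, hN2⟩ hne]
        exact (integrable_map_measure hKKm.aestronglyMeasurable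
          ((hx _).prodMk ((hx _).prodMk (hW.prodMk
            ((hzm _).prodMk (hzm _))))).aemeasurable).2
          (integrable_mul_of_memL2' (hMfl ⟨0, hN⟩) (hMfl ⟨1, hN2⟩))
      have hbeta : (∫ t, G2 g (t.1, t.2.2) * G2 g (t.2.1, t.2.2)
              ∂((Measure.map (x ⟨0, hN⟩) μ).prod ((Measure.map (x ⟨0, hN⟩) μ).prod ((Measure.map W μ).prod (Measure.map (fun ω => (rsh ω, ssh ω)) μ)))))
            - (∫ t, G2 g (t.1, (t.2.2.1, t.2.2.2.1)) * G2 g (t.2.1, (t.2.2.1, t.2.2.2.2))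
              ∂((Measure.map (x ⟨0, hN⟩) μ).prod ((Measure.map (x ⟨0, hN⟩) μ).prod ((Measure.map W μ).prod ((Measure.map (fun ω => (rsh ω, ssh ω)) μ).prod (Measure.map (fun ω => (rsh ω, ssh ω)) μ))))))
          = ∫ a, ∫ a', ∫ w,
            ((∫ z, g a (flipPert w z) * g a' (flipPert w z) ∂(Measure.map (fun ω => (rsh ω, ssh ω)) μ))
              - (∫ z, g a (flipPert w z) ∂(Measure.map (fun ω => (rsh ω, ssh ω)) μ)) *
                (∫ z, g a' (flipPert w z) ∂(Measure.map (fun ω => (rsh ω, ssh ω)) μ)))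
            ∂(Measure.map W μ) ∂(Measure.map (x ⟨0, hN⟩) μ) ∂(Measure.map (x ⟨0, hN⟩) μ) :=
        (beta_split (Measure.map (x ⟨0, hN⟩) μ) (Measure.map W μ) (Measure.map (fun ω => (rsh ω, ssh ω)) μ) (G2 g) hHHint hKKint).symm
      exact key.trans (by rw [← hbeta])
    · have h1 : ((N : ℝ) - 1) = 0 := by
        have hn1 : N = 1 := by omega
        simp [hn1]
      refine key.trans ?_
      rw [h1]
      simp
  refine ⟨heq, fun hbpos => ?_⟩
  have hco : (0 : ℝ) ≤ ((N : ℝ) - 1) / N := by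
    have h1 : (1 : ℝ) ≤ (N : ℝ) := by exact_mod_cast hN
    have h0 : (0 : ℝ) ≤ (N : ℝ) := by positivity
    exact div_nonneg (by linarith) h0
  have := mul_nonneg hco hbpos
  linarith [heq, this]
end
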